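/- arXiv:1209.6273 — 5 statements merged into one kernel-verified Lean document; each statement's English description precedes it below -/
import Mathlib

section
/- For all n ≥ 1 and all i with 1 ≤ i ≤ n, the number of permutations of {1,...,n} with exactly i-1 descents equals the number of permutations of {1,...,n} with exactly i-1 excedances, where an excedance of w is an index r ∈ {1,...,n} with w(r) > r. -/
/-- The descent number of a permutation of `Fin n`. -/
def des {n : ℕ} (w : Equiv.Perm (Fin n)) : ℕ :=
  (Finset.univ.filter fun r : Fin n =>
    ∃ s : Fin n, (s : ℕ) = (r : ℕ) + 1 ∧ w s < w r).card

/-- The excedance number of a permutation of `Fin n`: the number of indices `r`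
with `w r > r`. -/
def exc {n : ℕ} (w : Equiv.Perm (Fin n)) : ℕ :=
  (Finset.univ.filter fun r : Fin n => r < w r).card

namespace FoataAux

open Finset

variable {n : ℕ}

/-- Position `j` is a left-to-right maximum of the word `w 0, w 1, …`. -/
def isStart (w : Equiv.Perm (Fin n)) (j : Fin n) : Prop :=
  ∀ k, k < j → w k < w j

instance (w : Equiv.Perm (Fin n)) : DecidablePred (isStart w) := fun _ => by
  unfold isStart; infer_instance

lemma isStart_zero (w : Equiv.Perm (Fin n)) (j : Fin n) :
    (⟨0, j.pos⟩ : Fin n) ∈ Finset.univ.filter fun p => p ≤ j ∧ isStart w p := by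
  refine Finset.mem_filter.mpr ⟨Finset.mem_univ _, Fin.le_def.mpr (Nat.zero_le _), ?_⟩
  intro k hk
  have hk' : (k : ℕ) < 0 := Fin.lt_def.mp hk
  omega

/-- The last left-to-right maximum position `≤ j`. -/
def startOf (w : Equiv.Perm (Fin n)) (j : Fin n) : Fin n :=
  (Finset.univ.filter fun p => p ≤ j ∧ isStart w p).max' ⟨_, isStart_zero w j⟩

lemma startOf_mem (w : Equiv.Perm (Fin n)) (j : Fin n) :
    startOf w j ≤ j ∧ isStart w (startOf w j) := by
  have := Finset.max'_mem (Finset.univ.filter fun p => p ≤ j ∧ isStart w p)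
    ⟨_, isStart_zero w j⟩
  simpa [startOf] using (Finset.mem_filter.mp this).2

lemma startOf_le (w : Equiv.Perm (Fin n)) (j : Fin n) : startOf w j ≤ j :=
  (startOf_mem w j).1

lemma isStart_startOf (w : Equiv.Perm (Fin n)) (j : Fin n) : isStart w (startOf w j) :=
  (startOf_mem w j).2

lemma le_startOf (w : Equiv.Perm (Fin n)) {j p : Fin n} (hpj : p ≤ j)
    (hp : isStart w p) : p ≤ startOf w j :=
  Finset.le_max' _ _ (Finset.mem_filter.mpr ⟨Finset.mem_univ _, hpj, hp⟩)

/-- The leader `w (startOf w j)` dominates all values on positions `≤ j`. -/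
lemma le_w_startOf (w : Equiv.Perm (Fin n)) (j : Fin n) :
    ∀ k : Fin n, k ≤ j → w k ≤ w (startOf w j) := by
  set s := startOf w j with hs
  suffices H : ∀ m : ℕ, ∀ k : Fin n, (k : ℕ) = m → k ≤ j → w k ≤ w s by
    intro k hk; exact H k k rfl hk
  intro m
  induction m using Nat.strong_induction_on with
  | _ m IH =>
    intro k hkm hkj
    by_cases hks : k ≤ s
    · rcases eq_or_lt_of_le hks with h | h
      · exact le_of_eq (by rw [h])
      · exact le_of_lt (isStart_startOf w j k h)
    · have hnst : ¬ isStart w k := fun hst => hks (le_startOf w hkj hst)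
      unfold isStart at hnst
      push_neg at hnst
      obtain ⟨a, hak, haw⟩ := hnst
      have ham : (a : ℕ) < m := hkm ▸ Fin.lt_def.mp hak
      exact le_trans haw (IH _ ham a rfl (le_trans hak.le hkj))

/-- The companion function: successor inside a cycle, leader at a cycle end. -/
def tfun (w : Equiv.Perm (Fin n)) (j : Fin n) : Fin n :=
  if h : (j : ℕ) + 1 < n then
    (if isStart w ⟨(j : ℕ) + 1, h⟩ then startOf w j else ⟨(j : ℕ) + 1, h⟩)
  else startOf w j

/-- A cycle end: either the last position, or the next position starts a new cycle. -/
def isEnd (w : Equiv.Perm (Fin n)) (j : Fin n) : Prop :=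
  ∀ h : (j : ℕ) + 1 < n, isStart w ⟨(j : ℕ) + 1, h⟩

lemma tfun_of_end (w : Equiv.Perm (Fin n)) {j : Fin n} (hj : isEnd w j) :
    tfun w j = startOf w j := by
  unfold tfun
  split_ifs with h1 h2
  · rfl
  · exact absurd (hj h1) h2
  · rfl

lemma tfun_of_mid (w : Equiv.Perm (Fin n)) {j : Fin n} (h : (j : ℕ) + 1 < n)
    (hj : ¬ isStart w ⟨(j : ℕ) + 1, h⟩) : tfun w j = ⟨(j : ℕ) + 1, h⟩ := by
  unfold tfun
  rw [dif_pos h, if_neg hj]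

/-- At most one cycle end per leader. -/
lemma end_unique (w : Equiv.Perm (Fin n)) {a b : Fin n} (ha : isEnd w a)
    (hb : isEnd w b) (hab : startOf w a = startOf w b) : a = b := by
  rcases lt_trichotomy a b with h | h | h
  · exfalso
    have h1 : (a : ℕ) + 1 < n := by have := b.isLt; have := Fin.lt_def.mp h; omega
    have h2 : (⟨(a : ℕ) + 1, h1⟩ : Fin n) ≤ b := Fin.le_def.mpr (Fin.lt_def.mp h)
    have h3 := le_startOf w h2 (ha h1)
    rw [← hab] at h3
    have h4 := startOf_le w a
    have e3 : (a : ℕ) + 1 ≤ (startOf w a : ℕ) := Fin.le_def.mp h3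
    have e4 := Fin.le_def.mp h4
    omega
  · exact h
  · exfalso
    have h1 : (b : ℕ) + 1 < n := by have := a.isLt; have := Fin.lt_def.mp h; omega
    have h2 : (⟨(b : ℕ) + 1, h1⟩ : Fin n) ≤ a := Fin.le_def.mpr (Fin.lt_def.mp h)
    have h3 := le_startOf w h2 (hb h1)
    rw [hab] at h3
    have h4 := startOf_le w b
    have e3 : (b : ℕ) + 1 ≤ (startOf w b : ℕ) := Fin.le_def.mp h3
    have e4 := Fin.le_def.mp h4
    omega

lemma tfun_injective (w : Equiv.Perm (Fin n)) : Function.Injective (tfun w) := by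
  intro a b hab
  by_cases ha : isEnd w a <;> by_cases hb : isEnd w b
  · rw [tfun_of_end w ha, tfun_of_end w hb] at hab
    exact end_unique w ha hb hab
  · unfold isEnd at hb; push_neg at hb
    obtain ⟨h1, hb1⟩ := hb
    rw [tfun_of_end w ha, tfun_of_mid w h1 hb1] at hab
    exact absurd (hab ▸ isStart_startOf w a) hb1
  · unfold isEnd at ha; push_neg at ha
    obtain ⟨h1, ha1⟩ := ha
    rw [tfun_of_mid w h1 ha1, tfun_of_end w hb] at hab
    exact absurd (hab.symm ▸ isStart_startOf w b) ha1
  · unfold isEnd at ha hb; push_neg at ha hb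
    obtain ⟨h1, ha1⟩ := ha
    obtain ⟨h2, hb1⟩ := hb
    rw [tfun_of_mid w h1 ha1, tfun_of_mid w h2 hb1] at hab
    have : (a : ℕ) + 1 = (b : ℕ) + 1 := congrArg Fin.val hab
    exact Fin.ext (by omega)

/-- The cycle companion as a permutation. -/
noncomputable def tperm (w : Equiv.Perm (Fin n)) : Equiv.Perm (Fin n) :=
  Equiv.ofBijective (tfun w) (Finite.injective_iff_bijective.mp (tfun_injective w))

@[simp] lemma tperm_apply (w : Equiv.Perm (Fin n)) (j : Fin n) :
    tperm w j = tfun w j := rfl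

/-- Foata's fundamental map. -/
noncomputable def F (w : Equiv.Perm (Fin n)) : Equiv.Perm (Fin n) :=
  (w.symm.trans (tperm w)).trans w

lemma F_apply (w : Equiv.Perm (Fin n)) (j : Fin n) : F w (w j) = w (tfun w j) := by
  simp [F]

lemma lt_succ_self (j : Fin n) (h : (j : ℕ) + 1 < n) : j < (⟨(j : ℕ) + 1, h⟩ : Fin n) :=
  Fin.lt_def.mpr (Nat.lt_succ_self _)

/-- A position is a drop of `F w` exactly when it is a descent of the word. -/
lemma drop_iff (w : Equiv.Perm (Fin n)) (j : Fin n) :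
    F w (w j) < w j ↔ ∃ s : Fin n, (s : ℕ) = (j : ℕ) + 1 ∧ w s < w j := by
  rw [F_apply]
  unfold tfun
  split_ifs with h1 h2
  · -- j+1 exists and is a start: no drop, no descent
    constructor
    · intro hlt
      exact absurd (le_w_startOf w j j (le_refl j)) (not_le.mpr hlt)
    · rintro ⟨s, hs, hws⟩
      have hse : s = ⟨(j : ℕ) + 1, h1⟩ := Fin.ext hs
      subst hse
      have := h2 j (lt_succ_self j h1)
      exact absurd hws (not_lt.mpr this.le)
  · -- successor case: drop ↔ descent
    constructor
    · intro hlt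
      exact ⟨⟨(j : ℕ) + 1, h1⟩, rfl, hlt⟩
    · rintro ⟨s, hs, hws⟩
      have hse : s = ⟨(j : ℕ) + 1, h1⟩ := Fin.ext hs
      subst hse
      exact hws
  · -- j = n-1: no drop, no descent
    constructor
    · intro hlt
      exact absurd (le_w_startOf w j j (le_refl j)) (not_le.mpr hlt)
    · rintro ⟨s, hs, _⟩
      exact absurd (hs ▸ s.isLt) h1

/-- The number of drops of `F w` is the number of descents of `w`. -/
lemma card_drops_F (w : Equiv.Perm (Fin n)) :
    (Finset.univ.filter fun r : Fin n => F w r < r).card = des w := by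
  unfold des
  rw [← Finset.card_image_of_injective
      (Finset.univ.filter fun r : Fin n =>
        ∃ s : Fin n, (s : ℕ) = (r : ℕ) + 1 ∧ w s < w r) w.injective]
  congr 1
  ext r
  simp only [Finset.mem_image, Finset.mem_filter, Finset.mem_univ, true_and]
  constructor
  · intro hr
    refine ⟨w.symm r, ?_, w.apply_symm_apply r⟩
    rw [← (drop_iff w (w.symm r))]
    simpa [w.apply_symm_apply] using hr
  · rintro ⟨j, hj, rfl⟩
    exact (drop_iff w j).mpr hj

/-- Excedances of the inverse are drops. -/
lemma exc_inv_eq_drops (σ : Equiv.Perm (Fin n)) :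
    exc σ⁻¹ = (Finset.univ.filter fun r : Fin n => σ r < r).card := by
  unfold exc
  rw [← Finset.card_image_of_injective
      (Finset.univ.filter fun r : Fin n => σ r < r) σ.injective]
  congr 1
  ext r
  simp only [Finset.mem_image, Finset.mem_filter, Finset.mem_univ, true_and]
  constructor
  · intro hr
    exact ⟨σ⁻¹ r, by simpa [Equiv.Perm.inv_def] using hr, by simp [Equiv.Perm.inv_def]⟩
  · rintro ⟨s, hs, rfl⟩
    simpa [Equiv.Perm.inv_def] using hs

/-! ### Injectivity of the Foata map -/

/-- The set of values occupying positions `> j`. -/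
def suffVals (w : Equiv.Perm (Fin n)) (j : Fin n) : Finset (Fin n) :=
  (Finset.univ.filter fun k => j < k).image w

lemma image_filter_eq (w : Equiv.Perm (Fin n)) (p : Fin n → Prop) [DecidablePred p] :
    (Finset.univ.filter p).image w = Finset.univ.filter fun v => p (w.symm v) := by
  ext v
  simp only [Finset.mem_image, Finset.mem_filter, Finset.mem_univ, true_and]
  constructor
  · rintro ⟨k, hk, rfl⟩
    simpa using hk
  · intro h
    exact ⟨w.symm v, h, w.apply_symm_apply v⟩

lemma prefVals_eq (w : Equiv.Perm (Fin n)) (j : Fin n) :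
    (Finset.univ.filter fun k => k ≤ j).image w = Finset.univ \ suffVals w j := by
  rw [suffVals, image_filter_eq, image_filter_eq, ← Finset.filter_not]
  simp only [not_lt]

lemma isStart_succ_iff (w : Equiv.Perm (Fin n)) (j : Fin n) (h : (j : ℕ) + 1 < n) :
    isStart w ⟨(j : ℕ) + 1, h⟩ ↔
      ∀ v ∈ (Finset.univ.filter fun k => k ≤ j).image w, v < w ⟨(j : ℕ) + 1, h⟩ := by
  unfold isStart
  constructor
  · intro hst v hv
    simp only [Finset.mem_image, Finset.mem_filter, Finset.mem_univ, true_and] at hv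
    obtain ⟨k, hk, rfl⟩ := hv
    refine hst k (Fin.lt_def.mpr ?_)
    have := Fin.le_def.mp hk
    show (k : ℕ) < (j : ℕ) + 1
    omega
  · intro hall k hk
    refine hall (w k) ?_
    simp only [Finset.mem_image, Finset.mem_filter, Finset.mem_univ, true_and]
    refine ⟨k, Fin.le_def.mpr ?_, rfl⟩
    have : (k : ℕ) < (j : ℕ) + 1 := Fin.lt_def.mp hk
    omega

/-- The value of `F w` at a cycle-end position is the maximum of the prefix values. -/
lemma leader_max (w : Equiv.Perm (Fin n)) (j : Fin n) :
    w (startOf w j) ∈ (Finset.univ.filter fun k => k ≤ j).image w ∧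
      ∀ v ∈ (Finset.univ.filter fun k => k ≤ j).image w, v ≤ w (startOf w j) := by
  constructor
  · simp only [Finset.mem_image, Finset.mem_filter, Finset.mem_univ, true_and]
    exact ⟨startOf w j, startOf_le w j, rfl⟩
  · intro v hv
    simp only [Finset.mem_image, Finset.mem_filter, Finset.mem_univ, true_and] at hv
    obtain ⟨k, hk, rfl⟩ := hv
    exact le_w_startOf w j k hk

lemma F_injective : Function.Injective (F (n := n)) := by
  intro w₁ w₂ hF
  have key : ∀ d : ℕ, ∀ k : Fin n, n - d ≤ (k : ℕ) → w₁ k = w₂ k := by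
    intro d
    induction d with
    | zero =>
      intro k hk
      exact absurd hk (by have := k.isLt; omega)
    | succ d IH =>
      intro j hj
      by_cases hcase : n - d ≤ (j : ℕ)
      · exact IH j hcase
      -- suffix agreement
      have Hsuf : ∀ k : Fin n, j < k → w₁ k = w₂ k := by
        intro k hk
        exact IH k (by have := Fin.lt_def.mp hk; omega)
      have hS : suffVals w₁ j = suffVals w₂ j := by
        unfold suffVals
        apply Finset.image_congr
        intro k hk
        refine Hsuf k ?_
        simpa using hk
      have hA : (Finset.univ.filter fun k => k ≤ j).image w₁ =
          (Finset.univ.filter fun k => k ≤ j).image w₂ := by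
        rw [prefVals_eq, prefVals_eq, hS]
      -- the leader-case: both F-values are the max of the same set
      have leader_case :
          F w₁ (w₁ j) = w₁ (startOf w₁ j) → F w₂ (w₂ j) = w₂ (startOf w₂ j) →
            w₁ j = w₂ j := by
        intro e1 e2
        have m1 := leader_max w₁ j
        have m2 := leader_max w₂ j
        rw [hA] at m1
        have hmax : w₁ (startOf w₁ j) = w₂ (startOf w₂ j) :=
          le_antisymm (m2.2 _ m1.1) (m1.2 _ m2.1)
        have heq : F w₁ (w₁ j) = F w₁ (w₂ j) := by
          rw [e1, hmax, ← e2, hF]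
        exact (F w₁).injective heq
      by_cases h1 : (j : ℕ) + 1 < n
      · by_cases hst : isStart w₁ ⟨(j : ℕ) + 1, h1⟩
        · have hst2 : isStart w₂ ⟨(j : ℕ) + 1, h1⟩ := by
            rw [isStart_succ_iff w₂ j h1, ← hA,
              ← Hsuf ⟨(j : ℕ) + 1, h1⟩ (lt_succ_self j h1)]
            exact (isStart_succ_iff w₁ j h1).mp hst
          refine leader_case ?_ ?_
          · rw [F_apply, tfun_of_end w₁ (fun h => by exact hst)]
          · rw [F_apply, tfun_of_end w₂ (fun h => by exact hst2)]
        · have hst2 : ¬ isStart w₂ ⟨(j : ℕ) + 1, h1⟩ := by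
            rw [isStart_succ_iff w₂ j h1, ← hA,
              ← Hsuf ⟨(j : ℕ) + 1, h1⟩ (lt_succ_self j h1)]
            exact fun hc => hst ((isStart_succ_iff w₁ j h1).mpr hc)
          have e1 : F w₁ (w₁ j) = w₁ ⟨(j : ℕ) + 1, h1⟩ := by
            rw [F_apply, tfun_of_mid w₁ h1 hst]
          have e2 : F w₂ (w₂ j) = w₂ ⟨(j : ℕ) + 1, h1⟩ := by
            rw [F_apply, tfun_of_mid w₂ h1 hst2]
          have hsucc : w₁ ⟨(j : ℕ) + 1, h1⟩ = w₂ ⟨(j : ℕ) + 1, h1⟩ :=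
            Hsuf _ (lt_succ_self j h1)
          have heq : F w₁ (w₁ j) = F w₁ (w₂ j) := by
            rw [e1, hsucc, ← e2, hF]
          exact (F w₁).injective heq
      · refine leader_case ?_ ?_
        · rw [F_apply, tfun_of_end w₁ (fun h => absurd h h1)]
        · rw [F_apply, tfun_of_end w₂ (fun h => absurd h h1)]
  exact Equiv.ext fun k => key n k (by omega)

/-- The composed map: injective and turning descents into excedances. -/
noncomputable def Φ (w : Equiv.Perm (Fin n)) : Equiv.Perm (Fin n) := (F w)⁻¹

lemma Φ_injective : Function.Injective (Φ (n := n)) := fun a b h =>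
  F_injective (inv_injective h)

lemma exc_Φ (w : Equiv.Perm (Fin n)) : exc (Φ w) = des w :=
  (exc_inv_eq_drops (F w)).trans (card_drops_F w)

end FoataAux

open FoataAux in
/-- The number of permutations with `i - 1` descents equals the number of
permutations with `i - 1` excedances. -/
theorem card_des_eq_card_exc (n i : ℕ) (hn : 1 ≤ n) (hi1 : 1 ≤ i) (hi2 : i ≤ n) :
    (Finset.univ.filter fun w : Equiv.Perm (Fin n) => des w = i - 1).card =
      (Finset.univ.filter fun w : Equiv.Perm (Fin n) => exc w = i - 1).card := by
  classical
  set f : ℕ → ℕ := fun k =>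
    (Finset.univ.filter fun w : Equiv.Perm (Fin n) => des w = k).card with hf
  set g : ℕ → ℕ := fun k =>
    (Finset.univ.filter fun w : Equiv.Perm (Fin n) => exc w = k).card with hg
  have hle : ∀ k ∈ Finset.range (n + 1), f k ≤ g k := by
    intro k _
    apply Finset.card_le_card_of_injOn Φ
    · intro w hw
      simp only [Finset.mem_coe, Finset.mem_filter, Finset.mem_univ, true_and] at hw ⊢
      rw [exc_Φ]; exact hw
    · exact fun a _ b _ h => Φ_injective h
  have hdes_lt : ∀ w : Equiv.Perm (Fin n), des w < n + 1 := by
    intro w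
    have : des w ≤ (Finset.univ : Finset (Fin n)).card := Finset.card_filter_le _ _
    simpa using Nat.lt_succ_of_le (by simpa using this)
  have hexc_lt : ∀ w : Equiv.Perm (Fin n), exc w < n + 1 := by
    intro w
    have : exc w ≤ (Finset.univ : Finset (Fin n)).card := Finset.card_filter_le _ _
    simpa using Nat.lt_succ_of_le (by simpa using this)
  have h1 : (Finset.univ : Finset (Equiv.Perm (Fin n))).card =
      ∑ k ∈ Finset.range (n + 1), f k :=
    Finset.card_eq_sum_card_fiberwise fun w _ => Finset.mem_range.mpr (hdes_lt w)
  have h2 : (Finset.univ : Finset (Equiv.Perm (Fin n))).card =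
      ∑ k ∈ Finset.range (n + 1), g k :=
    Finset.card_eq_sum_card_fiberwise fun w _ => Finset.mem_range.mpr (hexc_lt w)
  have hsum : ∑ k ∈ Finset.range (n + 1), f k = ∑ k ∈ Finset.range (n + 1), g k :=
    h1.symm.trans h2
  have := (Finset.sum_eq_sum_iff_of_le hle).mp hsum (i - 1)
    (Finset.mem_range.mpr (by omega))
  exact this
end

section
/- Worpitzky's identity: for every n ≥ 1 and every nonnegative integer k, k^n = Σ_{i=1}^{n} A_{n,i} · C(k+n-i, n), where C(m, n) denotes the binomial coefficient. -/
open Finset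

lemma card_strictMono (n m : ℕ) :
    (Finset.univ.filter fun F : Fin n → Fin m => StrictMono F).card = m.choose n := by
  have key : (Finset.univ.filter fun F : Fin n → Fin m => StrictMono F).card
      = (Finset.powersetCard n (Finset.univ : Finset (Fin m))).card := by
    refine Finset.card_bij' (fun F _ => Finset.univ.image F)
      (fun s hs => ⇑(s.orderEmbOfFin (by simpa using (Finset.mem_powersetCard.1 hs).2))) ?_ ?_ ?_ ?_
    · intro F hF
      rw [Finset.mem_powersetCard]
      refine ⟨Finset.subset_univ _, ?_⟩
      rw [Finset.card_image_of_injective _ (mem_filter.1 hF).2.injective, Finset.card_univ,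
        Fintype.card_fin]
    · intro s hs
      simp only [mem_filter, mem_univ, true_and]
      exact (s.orderEmbOfFin _).strictMono
    · intro F hF
      exact (Finset.orderEmbOfFin_unique _ (fun x => Finset.mem_image_of_mem _ (mem_univ x))
        (mem_filter.1 hF).2).symm
    · intro s hs
      have hcard : s.card = n := by simpa using (Finset.mem_powersetCard.1 hs).2
      have hr := Finset.range_orderEmbOfFin s hcard
      ext x
      simp only [Finset.mem_image, mem_univ, true_and]
      constructor
      · rintro ⟨i, rfl⟩; exact Finset.orderEmbOfFin_mem _ _ _
      · intro hx
        have : x ∈ Set.range (s.orderEmbOfFin hcard) := by rw [hr]; exact hx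
        obtain ⟨i, hi⟩ := this
        exact ⟨i, hi⟩
  rw [key, Finset.card_powersetCard, Finset.card_univ, Fintype.card_fin]

lemma sm_gap {n : ℕ} {F : Fin n → ℕ} (hF : StrictMono F) {a b : Fin n} (h : (a:ℕ) ≤ b) :
    F a + ((b:ℕ) - a) ≤ F b := by
  obtain ⟨c, hc⟩ : ∃ c, (b:ℕ) = (a:ℕ) + c := ⟨(b:ℕ) - a, by omega⟩
  induction c generalizing b with
  | zero => have : b = a := Fin.ext (by omega); subst this; omega
  | succ c ih =>
    have hb' : (a:ℕ) + c < n := by have := b.isLt; omega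
    have h1 := ih (b := ⟨(a:ℕ) + c, hb'⟩) (by simp) rfl
    have h2 : F ⟨(a:ℕ) + c, hb'⟩ < F b := hF (by simp [Fin.lt_def]; omega)
    simp at h1
    omega

section desfacts
variable {n : ℕ} (w : Equiv.Perm (Fin n))

def DesAt (r : Fin n) : Prop := ∃ s : Fin n, (s : ℕ) = (r : ℕ) + 1 ∧ w s < w r

instance : DecidablePred (DesAt w) := fun r =>
  decidable_of_iff (∃ s : Fin n, (s : ℕ) = (r : ℕ) + 1 ∧ w s < w r) Iff.rfl

lemma des_eq : des w = (Finset.univ.filter (DesAt w)).card := by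
  rw [des]
  apply Finset.card_bij (fun a _ => a) <;> simp [DesAt]

lemma desAt_lt {r : Fin n} (h : DesAt w r) : (r : ℕ) + 1 < n := by
  obtain ⟨s, hs, -⟩ := h
  have := s.isLt; omega

lemma desAt_iff {r : Fin n} (h : (r : ℕ) + 1 < n) :
    DesAt w r ↔ w ⟨(r : ℕ) + 1, h⟩ < w r := by
  constructor
  · rintro ⟨s, hs, hlt⟩
    have : s = ⟨(r : ℕ) + 1, h⟩ := Fin.ext hs
    rwa [← this]
  · intro hlt
    exact ⟨⟨(r : ℕ) + 1, h⟩, rfl, hlt⟩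

/-- number of non-descents strictly below `r` -/
def ndc (r : Fin n) : ℕ := (Finset.univ.filter fun j : Fin n => j < r ∧ ¬ DesAt w j).card
/-- number of descents strictly below `r` -/
def dc (r : Fin n) : ℕ := (Finset.univ.filter fun j : Fin n => j < r ∧ DesAt w j).card

lemma ndc_add_dc (r : Fin n) : ndc w r + dc w r = (r : ℕ) := by
  rw [ndc, dc, ← Finset.card_union_of_disjoint]
  · have : ((Finset.univ.filter fun j : Fin n => j < r ∧ ¬ DesAt w j) ∪
        (Finset.univ.filter fun j : Fin n => j < r ∧ DesAt w j)) = Finset.Iio r := by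
      ext j
      simp only [Finset.mem_union, Finset.mem_filter, Finset.mem_univ, true_and, Finset.mem_Iio]
      tauto
    rw [this, Fin.card_Iio]
  · simp only [Finset.disjoint_filter]
    tauto

end desfacts

section desfacts2
variable {n : ℕ} (w : Equiv.Perm (Fin n))

lemma filter_lt_step (P : Fin n → Prop) [DecidablePred P] {r r' : Fin n}
    (h : (r' : ℕ) = (r : ℕ) + 1) :
    (Finset.univ.filter fun j : Fin n => j < r' ∧ P j).card
      = (Finset.univ.filter fun j : Fin n => j < r ∧ P j).card + (if P r then 1 else 0) := by
  by_cases hP : P r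
  · rw [if_pos hP]
    have : (Finset.univ.filter fun j : Fin n => j < r' ∧ P j)
        = insert r (Finset.univ.filter fun j : Fin n => j < r ∧ P j) := by
      ext j
      simp only [Finset.mem_filter, Finset.mem_univ, true_and, Finset.mem_insert, Fin.lt_def]
      constructor
      · rintro ⟨hj, hPj⟩
        rcases Nat.lt_or_ge (j : ℕ) (r : ℕ) with h1 | h1
        · exact Or.inr ⟨h1, hPj⟩
        · exact Or.inl (Fin.ext (by omega))
      · rintro (rfl | ⟨hj, hPj⟩)
        · exact ⟨by omega, hP⟩
        · exact ⟨by omega, hPj⟩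
    rw [this, Finset.card_insert_of_notMem (by simp)]
  · rw [if_neg hP]
    have : (Finset.univ.filter fun j : Fin n => j < r' ∧ P j)
        = (Finset.univ.filter fun j : Fin n => j < r ∧ P j) := by
      ext j
      simp only [Finset.mem_filter, Finset.mem_univ, true_and, Fin.lt_def]
      constructor
      · rintro ⟨hj, hPj⟩
        refine ⟨?_, hPj⟩
        rcases Nat.lt_or_ge (j : ℕ) (r : ℕ) with h1 | h1
        · exact h1
        · exact absurd hPj (by have : j = r := Fin.ext (by omega); rw [this]; exact hP)
      · rintro ⟨hj, hPj⟩
        exact ⟨by omega, hPj⟩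
    rw [this]
    simp

lemma ndc_step {r r' : Fin n} (h : (r' : ℕ) = (r : ℕ) + 1) :
    ndc w r' = ndc w r + (if DesAt w r then 0 else 1) := by
  rw [ndc, ndc, filter_lt_step (fun j => ¬ DesAt w j) h]
  by_cases hP : DesAt w r <;> simp [hP]

lemma dc_step {r r' : Fin n} (h : (r' : ℕ) = (r : ℕ) + 1) :
    dc w r' = dc w r + (if DesAt w r then 1 else 0) := by
  rw [dc, dc, filter_lt_step (DesAt w) h]

lemma ndc_mono {r r' : Fin n} (h : r ≤ r') : ndc w r ≤ ndc w r' :=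
  Finset.card_le_card (by
    apply Finset.monotone_filter_right
    intro j _ hj
    exact ⟨lt_of_lt_of_le hj.1 h, hj.2⟩)

lemma dc_mono {r r' : Fin n} (h : r ≤ r') : dc w r ≤ dc w r' :=
  Finset.card_le_card (by
    apply Finset.monotone_filter_right
    intro j _ hj
    exact ⟨lt_of_lt_of_le hj.1 h, hj.2⟩)

lemma dc_last (hn : 1 ≤ n) : dc w ⟨n - 1, by omega⟩ = des w := by
  rw [dc, des_eq]
  congr 1
  ext j
  simp only [Finset.mem_filter, Finset.mem_univ, true_and, Fin.lt_def]
  constructor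
  · rintro ⟨-, hj⟩; exact hj
  · intro hj
    exact ⟨by have := desAt_lt w hj; omega, hj⟩

lemma ndc_last (hn : 1 ≤ n) : ndc w ⟨n - 1, by omega⟩ + des w = n - 1 := by
  have := ndc_add_dc w ⟨n - 1, by omega⟩
  rw [dc_last w hn] at this
  simpa using this

lemma ndc_le (hn : 1 ≤ n) (r : Fin n) : ndc w r + des w ≤ n - 1 := by
  have h1 : r ≤ (⟨n - 1, by omega⟩ : Fin n) := by
    rw [Fin.le_def]; have := r.isLt; simp; omega
  have := ndc_mono w h1
  have := ndc_last w hn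
  omega

end desfacts2

lemma F_ge {n m : ℕ} {F : Fin n → Fin m} (h : StrictMono F) (r : Fin n) :
    (r : ℕ) ≤ (F r : ℕ) := by
  have := sm_gap (F := fun t => (F t : ℕ)) (fun a b hab => h hab)
    (a := ⟨0, by have := r.isLt; omega⟩) (b := r) (by simp)
  simp at this
  omega

lemma F_top {n m : ℕ} (hn : 1 ≤ n) {F : Fin n → Fin m} (h : StrictMono F) (r : Fin n) :
    (F r : ℕ) + (n - 1 - (r : ℕ)) ≤ (F ⟨n - 1, by omega⟩ : ℕ) := by
  have := sm_gap (F := fun t => (F t : ℕ)) (fun a b hab => h hab)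
    (a := r) (b := ⟨n - 1, by omega⟩) (by simp; have := r.isLt; omega)
  simpa using this

lemma dc_le {n : ℕ} (hn : 1 ≤ n) (w : Equiv.Perm (Fin n)) (r : Fin n) : dc w r ≤ des w := by
  have h1 : r ≤ (⟨n - 1, by omega⟩ : Fin n) := by
    rw [Fin.le_def]; have := r.isLt; simp; omega
  have := dc_mono w h1
  rw [dc_last w hn] at this
  exact this

lemma psi_lt {n k : ℕ} (hn : 1 ≤ n) (w : Equiv.Perm (Fin n))
    {F : Fin n → Fin (k + (n - 1 - des w))} (hF : StrictMono F) (r : Fin n) :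
    (F r : ℕ) - ndc w r < k := by
  have h1 := F_top hn hF r
  have h2 : (F ⟨n - 1, by omega⟩ : ℕ) < k + (n - 1 - des w) := (F _).isLt
  have h3 := ndc_add_dc w r
  have h4 := dc_le hn w r
  have h5 := r.isLt
  have h6 : des w ≤ n - 1 := by have := ndc_le w hn ⟨0, by omega⟩; omega
  have h7 := F_ge hF r
  omega

lemma strictMono_of_consec {n : ℕ} {α : Type*} [Preorder α] (G : Fin n → α)
    (h : ∀ r r' : Fin n, (r' : ℕ) = (r : ℕ) + 1 → G r < G r') : StrictMono G := by
  intro a b hab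
  rw [Fin.lt_def] at hab
  obtain ⟨c, hc⟩ : ∃ c, (b : ℕ) = (a : ℕ) + (c + 1) := ⟨(b : ℕ) - a - 1, by omega⟩
  induction c generalizing b with
  | zero => exact h a b (by omega)
  | succ c ih =>
    have hb' : (a : ℕ) + (c + 1) < n := by have := b.isLt; omega
    exact lt_trans (ih (b := ⟨_, hb'⟩) (by simp) rfl) (h ⟨_, hb'⟩ b (by simp; omega))

lemma fiber_card (n k : ℕ) (hn : 1 ≤ n) (w : Equiv.Perm (Fin n)) :
    (Finset.univ.filter fun f : Fin n → Fin k => Tuple.sort f = w).card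
      = (k + (n - 1 - des w)).choose n := by
  rw [← card_strictMono n (k + (n - 1 - des w))]
  have hndc_le : ∀ r : Fin n, ndc w r + des w ≤ n - 1 := ndc_le w hn
  have hndc_r : ∀ r : Fin n, ndc w r ≤ (r : ℕ) := fun r => by
    have := ndc_add_dc w r; omega
  refine Finset.card_bij'
    (fun f _ => fun r : Fin n => (⟨(f (w r) : ℕ) + ndc w r, by
        have h1 := (f (w r)).isLt
        have h2 := hndc_le r
        omega⟩ : Fin (k + (n - 1 - des w))))
    (fun F hF => fun x : Fin n => (⟨(F (w⁻¹ x) : ℕ) - ndc w (w⁻¹ x),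
        psi_lt hn w (Finset.mem_filter.1 hF).2 (w⁻¹ x)⟩ : Fin k))
    ?_ ?_ ?_ ?_
  · -- forward map lands in strict mono
    intro f hf
    simp only [Finset.mem_filter, Finset.mem_univ, true_and] at hf ⊢
    obtain ⟨hmono, htie⟩ := Tuple.eq_sort_iff.mp hf.symm
    apply strictMono_of_consec
    intro r r' hrr
    have hrn : (r : ℕ) + 1 < n := by have := r'.isLt; omega
    have hle : f (w r) ≤ f (w r') := by
      have : r ≤ r' := by rw [Fin.le_def]; omega
      exact hmono this
    rw [Fin.lt_def]
    simp only
    by_cases hdes : DesAt w r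
    · have hnd := ndc_step w hrr
      rw [if_pos hdes] at hnd
      have hwlt : w r' < w r := by
        have h := (desAt_iff w hrn).1 hdes
        have he : (⟨(r : ℕ) + 1, hrn⟩ : Fin n) = r' := Fin.ext (by simp; omega)
        rwa [he] at h
      have hne : f (w r) ≠ f (w r') := by
        intro he
        have hltrr : r < r' := by rw [Fin.lt_def]; omega
        have h := htie r r' hltrr he
        exact absurd hwlt (asymm h)
      have hlt : f (w r) < f (w r') := lt_of_le_of_ne hle hne
      rw [Fin.lt_def] at hlt
      omega
    · have hnd := ndc_step w hrr
      rw [if_neg hdes] at hnd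
      rw [Fin.le_def] at hle
      omega
  · -- backward map lands in fiber
    intro F hF
    have hF' : StrictMono F := (Finset.mem_filter.1 hF).2
    simp only [Finset.mem_filter, Finset.mem_univ, true_and]
    symm
    have hgw : ∀ r : Fin n,
        ((⟨(F (w⁻¹ (w r)) : ℕ) - ndc w (w⁻¹ (w r)),
          psi_lt hn w hF' (w⁻¹ (w r))⟩ : Fin k) : ℕ) = (F r : ℕ) - ndc w r := by
      intro r
      simp [Equiv.Perm.inv_def, Equiv.symm_apply_apply]
    have hgap : ∀ a b : Fin n, (a : ℕ) ≤ (b : ℕ) →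
        (F a : ℕ) + ((b : ℕ) - (a : ℕ)) ≤ (F b : ℕ) :=
      fun a b hab => sm_gap (F := fun t => (F t : ℕ)) (fun a b hab => hF' hab) hab
    have hgmono : ∀ a b : Fin n, (a : ℕ) ≤ (b : ℕ) →
        (F a : ℕ) - ndc w a ≤ (F b : ℕ) - ndc w b := by
      intro a b hab
      have h1 := hgap a b hab
      have h2 := ndc_add_dc w a
      have h3 := ndc_add_dc w b
      have h4 := dc_mono w (show a ≤ b by rw [Fin.le_def]; omega)
      have h5 := F_ge hF' a
      have h6 := F_ge hF' b
      omega
    have hconsec : ∀ r r' : Fin n, (r' : ℕ) = (r : ℕ) + 1 →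
        ((F r : ℕ) - ndc w r < (F r' : ℕ) - ndc w r' ∨
          ((F r : ℕ) - ndc w r = (F r' : ℕ) - ndc w r' ∧ w r < w r')) := by
      intro r r' hrr
      have hrn : (r : ℕ) + 1 < n := by have := r'.isLt; omega
      have hstep : (F r : ℕ) < (F r' : ℕ) := hF' (show r < r' by rw [Fin.lt_def]; omega)
      have h2 := ndc_add_dc w r
      have h5 := F_ge hF' r
      by_cases hdes : DesAt w r
      · have hnd := ndc_step w hrr
        rw [if_pos hdes] at hnd
        left; omega
      · have hnd := ndc_step w hrr
        rw [if_neg hdes] at hnd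
        rcases Nat.lt_or_ge ((F r : ℕ) - ndc w r) ((F r' : ℕ) - ndc w r') with h | h
        · left; exact h
        · right
          refine ⟨by omega, ?_⟩
          have hwne : w r ≠ w r' := fun he => by
            have := w.injective he
            rw [this] at hrr; omega
          have hnlt : ¬ (w r' < w r) := fun hlt => hdes ⟨r', hrr, hlt⟩
          rcases lt_or_gt_of_ne hwne with h' | h'
          · exact h'
          · exact absurd h' hnlt
    rw [Tuple.eq_sort_iff]
    constructor
    · intro a b hab
      simp only [Function.comp_apply]
      rw [Fin.le_def, hgw, hgw]
      exact hgmono a b (by rw [Fin.le_def] at hab; exact hab)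
    · intro i j hij heq
      have heqv : (F i : ℕ) - ndc w i = (F j : ℕ) - ndc w j := by
        have := congrArg (fun t : Fin k => (t : ℕ)) heq
        simpa [Equiv.Perm.inv_def, Equiv.symm_apply_apply] using this
      clear heq
      rw [Fin.lt_def] at hij
      obtain ⟨c, hc⟩ : ∃ c, (j : ℕ) = (i : ℕ) + (c + 1) := ⟨(j : ℕ) - i - 1, by omega⟩
      induction c generalizing j with
      | zero =>
        rcases hconsec i j (by omega) with h | h
        · omega
        · exact h.2
      | succ c ih =>
        have hb' : (i : ℕ) + (c + 1) < n := by have := j.isLt; omega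
        set j' : Fin n := ⟨(i : ℕ) + (c + 1), hb'⟩ with hj'
        have h1 : (F i : ℕ) - ndc w i ≤ (F j' : ℕ) - ndc w j' := hgmono i j' (by show (i:ℕ) ≤ (i:ℕ) + (c + 1); omega)
        have h2 : (F j' : ℕ) - ndc w j' ≤ (F j : ℕ) - ndc w j := hgmono j' j (by show (i:ℕ) + (c + 1) ≤ (j:ℕ); omega)
        have heq1 : (F i : ℕ) - ndc w i = (F j' : ℕ) - ndc w j' := by omega
        have hij' : w i < w j' := ih j' (by show (i:ℕ) < (i:ℕ) + (c + 1); omega) heq1 rfl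
        have hjj' : w j' < w j := by
          rcases hconsec j' j (by show (j:ℕ) = (i:ℕ) + (c + 1) + 1; omega) with h | h
          · omega
          · exact h.2
        exact lt_trans hij' hjj'
  · -- left inverse
    intro f hf
    funext x
    apply Fin.ext
    simp [Equiv.Perm.inv_def, Equiv.apply_symm_apply]
  · -- right inverse
    intro F hF
    have hF' : StrictMono F := (Finset.mem_filter.1 hF).2
    funext r
    apply Fin.ext
    simp only [Equiv.Perm.inv_def, Equiv.symm_apply_apply]
    have h1 := F_ge hF' r
    have h2 := hndc_r r
    omega

/-- The Eulerian number `A_{n,i}`: the number of permutations of `Fin n`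
with exactly `i - 1` descents. -/
def eulerianNum (n i : ℕ) : ℕ :=
  (Finset.univ.filter fun w : Equiv.Perm (Fin n) => des w = i - 1).card

/-- Worpitzky's identity: `k^n = ∑_{i=1}^n A_{n,i} C(k+n-i, n)`. -/
theorem worpitzky (n k : ℕ) (hn : 1 ≤ n) :
    k ^ n = ∑ i ∈ Finset.Icc 1 n, eulerianNum n i * Nat.choose (k + n - i) n := by
  have hdes_le : ∀ w : Equiv.Perm (Fin n), des w ≤ n - 1 := fun w => by
    have := ndc_le w hn ⟨0, by omega⟩; omega
  have h1 : k ^ n = (Finset.univ : Finset (Fin n → Fin k)).card := by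
    rw [Finset.card_univ, Fintype.card_fun]
    simp
  rw [h1, Finset.card_eq_sum_card_fiberwise
    (f := fun f : Fin n → Fin k => Tuple.sort f) (t := Finset.univ)
    (fun x _ => Finset.mem_univ _)]
  rw [Finset.sum_congr rfl (fun w _ => fiber_card n k hn w)]
  rw [← Finset.sum_fiberwise_of_maps_to (g := fun w : Equiv.Perm (Fin n) => des w + 1)
    (t := Finset.Icc 1 n)
    (fun w _ => by simp only [Finset.mem_Icc]; have := hdes_le w; omega)]
  apply Finset.sum_congr rfl
  intro i hi
  rw [Finset.mem_Icc] at hi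
  have hterm : ∀ w ∈ Finset.univ.filter (fun w : Equiv.Perm (Fin n) => des w + 1 = i),
      (k + (n - 1 - des w)).choose n = (k + n - i).choose n := by
    intro w hw
    rw [Finset.mem_filter] at hw
    have := hdes_le w
    congr 1
    omega
  rw [Finset.sum_congr rfl hterm, Finset.sum_const, smul_eq_mul]
  congr 1
  rw [eulerianNum]
  apply Finset.card_bij (fun a _ => a)
  · intro a ha
    simp only [Finset.mem_filter, Finset.mem_univ, true_and] at ha ⊢
    omega
  · intro a ha b hb hab
    exact hab
  · intro b hb
    simp only [Finset.mem_filter, Finset.mem_univ, true_and] at hb ⊢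
    exact ⟨b, by omega, rfl⟩
end

section
/- For every n ≥ 1, the Eulerian numbers are unimodal: A_{n,1} ≤ A_{n,2} ≤ ⋯ ≤ A_{n,⌈n/2⌉} and A_{n,⌈n/2⌉} ≥ A_{n,⌈n/2⌉+1} ≥ ⋯ ≥ A_{n,n}. -/
namespace EulerAux

open Finset Equiv

/-- count of perms with exactly k descents -/
def A (n k : ℕ) : ℕ := (Finset.univ.filter fun w : Equiv.Perm (Fin n) => des w = k).card

/-- descent at position r -/
def dsc {n : ℕ} (w : Equiv.Perm (Fin n)) (r : Fin n) : Prop :=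
  ∃ s : Fin n, (s : ℕ) = (r : ℕ) + 1 ∧ w s < w r

instance {n : ℕ} (w : Equiv.Perm (Fin n)) (r : Fin n) : Decidable (dsc w r) := by
  unfold dsc; infer_instance

lemma des_eq {n : ℕ} (w : Equiv.Perm (Fin n)) :
    des w = (Finset.univ.filter fun r => dsc w r).card := rfl

lemma eulerianNum_eq (n i : ℕ) : eulerianNum n i = A n (i - 1) := rfl

lemma dsc_iff {n : ℕ} (w : Equiv.Perm (Fin n)) (r : Fin n) :
    dsc w r ↔ ∃ s : Fin n, (s : ℕ) = (r : ℕ) + 1 ∧ w s < w r := Iff.rfl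

lemma succAbove_val {n : ℕ} (p : Fin (n + 1)) (j : Fin n) :
    ((p.succAbove j : Fin (n + 1)) : ℕ) = if (j : ℕ) < (p : ℕ) then (j : ℕ) else (j : ℕ) + 1 := by
  rw [Fin.succAbove]
  by_cases h : j.castSucc < p
  · rw [if_pos h, if_pos (by simpa [Fin.lt_def] using h)]; simp
  · rw [if_neg h, if_neg (by simpa [Fin.lt_def] using h)]; simp

/-- the insertion of the maximum at slot `p` -/
def insFun {n : ℕ} (σ : Equiv.Perm (Fin n)) (p : Fin (n + 1)) : Fin (n + 1) → Fin (n + 1) :=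
  p.insertNth (Fin.last n) (fun j => (σ j).castSucc)

lemma insFun_injective {n : ℕ} (σ : Equiv.Perm (Fin n)) (p : Fin (n + 1)) :
    Function.Injective (insFun σ p) := by
  intro a b hab
  rcases eq_or_ne a p with rfl | ha
  · rcases eq_or_ne b a with rfl | hb
    · rfl
    · exfalso
      obtain ⟨j, rfl⟩ := Fin.exists_succAbove_eq hb
      rw [insFun, Fin.insertNth_apply_same, Fin.insertNth_apply_succAbove] at hab
      exact (Fin.castSucc_lt_last (σ j)).ne hab.symm
  · obtain ⟨j, rfl⟩ := Fin.exists_succAbove_eq ha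
    rcases eq_or_ne b p with rfl | hb
    · exfalso
      rw [insFun, Fin.insertNth_apply_same, Fin.insertNth_apply_succAbove] at hab
      exact (Fin.castSucc_lt_last (σ j)).ne hab
    · obtain ⟨j', rfl⟩ := Fin.exists_succAbove_eq hb
      rw [insFun, Fin.insertNth_apply_succAbove, Fin.insertNth_apply_succAbove] at hab
      have := σ.injective (Fin.castSucc_injective _ hab)
      rw [this]

noncomputable def ins {n : ℕ} (σ : Equiv.Perm (Fin n)) (p : Fin (n + 1)) : Equiv.Perm (Fin (n + 1)) :=
  Equiv.ofBijective (insFun σ p) (Finite.injective_iff_bijective.mp (insFun_injective σ p))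

@[simp] lemma ins_apply_same {n : ℕ} (σ : Equiv.Perm (Fin n)) (p : Fin (n + 1)) :
    ins σ p p = Fin.last n := by
  show insFun σ p p = _
  exact Fin.insertNth_apply_same ..


@[simp] lemma ins_apply_succAbove {n : ℕ} (σ : Equiv.Perm (Fin n)) (p : Fin (n + 1)) (j : Fin n) :
    ins σ p (p.succAbove j) = (σ j).castSucc := by
  show insFun σ p _ = _
  exact Fin.insertNth_apply_succAbove ..

lemma dsc_ins_iff {n : ℕ} (σ : Equiv.Perm (Fin n)) (p : Fin (n + 1)) (r' : Fin (n + 1)) :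
    dsc (ins σ p) r' ↔ (r' = p ∧ (p : ℕ) < n) ∨
      ∃ j : Fin n, dsc σ j ∧ (j : ℕ) + 1 ≠ (p : ℕ) ∧ r' = p.succAbove j := by
  constructor
  · rintro ⟨s', hs', hlt⟩
    rcases eq_or_ne r' p with rfl | hr
    · exact Or.inl ⟨rfl, by have := s'.isLt; omega⟩
    · right
      obtain ⟨j, rfl⟩ := Fin.exists_succAbove_eq hr
      have hws : s' ≠ p := by
        rintro rfl
        rw [ins_apply_same] at hlt
        exact absurd hlt (not_lt.2 (Fin.le_last _))
      obtain ⟨j₂, rfl⟩ := Fin.exists_succAbove_eq hws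
      rw [ins_apply_succAbove, ins_apply_succAbove, Fin.castSucc_lt_castSucc_iff] at hlt
      rw [succAbove_val, succAbove_val] at hs'
      have hj2 : (j₂ : ℕ) = (j : ℕ) + 1 ∧ (j : ℕ) + 1 ≠ (p : ℕ) := by
        split_ifs at hs' <;> omega
      exact ⟨j, ⟨j₂, hj2.1, hlt⟩, hj2.2, rfl⟩
  · rintro (⟨heq, hp⟩ | ⟨j, ⟨s, hs, hlt⟩, hne, rfl⟩)
    case mpr.inl =>
      subst heq
      have hs' : ((⟨(r' : ℕ) + 1, by omega⟩ : Fin (n + 1)) : ℕ) = (r' : ℕ) + 1 := rfl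
      set s' : Fin (n + 1) := ⟨(r' : ℕ) + 1, by omega⟩ with hdef
      have hne : s' ≠ r' := by
        intro h; rw [Fin.ext_iff] at h; omega
      obtain ⟨j, hj⟩ := Fin.exists_succAbove_eq hne
      refine ⟨s', hs', ?_⟩
      rw [← hj, ins_apply_succAbove, ins_apply_same]
      exact Fin.castSucc_lt_last _
    · refine ⟨p.succAbove s, ?_, ?_⟩
      · rw [succAbove_val, succAbove_val]
        split_ifs <;> omega
      · rw [ins_apply_succAbove, ins_apply_succAbove, Fin.castSucc_lt_castSucc_iff]
        exact hlt

lemma des_ins {n : ℕ} (σ : Equiv.Perm (Fin n)) (p : Fin (n + 1)) :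
    des (ins σ p) =
      (Finset.univ.filter fun j : Fin n => dsc σ j ∧ (j : ℕ) + 1 ≠ (p : ℕ)).card
      + (if (p : ℕ) < n then 1 else 0) := by
  rw [des_eq]
  have hinj : Function.Injective (p.succAbove) := Fin.succAbove_right_injective
  have hnotmem : p ∉ (Finset.univ.filter fun j : Fin n =>
      dsc σ j ∧ (j : ℕ) + 1 ≠ (p : ℕ)).image p.succAbove := by
    simp only [Finset.mem_image, Finset.mem_filter]
    rintro ⟨j, _, hj⟩
    exact Fin.succAbove_ne p j hj
  by_cases hp : (p : ℕ) < n
  · rw [if_pos hp]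
    have he : (Finset.univ.filter fun r' => dsc (ins σ p) r') =
        insert p ((Finset.univ.filter fun j : Fin n =>
          dsc σ j ∧ (j : ℕ) + 1 ≠ (p : ℕ)).image p.succAbove) := by
      ext r'
      simp only [Finset.mem_filter, Finset.mem_univ, true_and, Finset.mem_insert,
        Finset.mem_image, dsc_ins_iff]
      constructor
      · rintro (⟨rfl, _⟩ | ⟨j, hd, hne, rfl⟩)
        · exact Or.inl rfl
        · exact Or.inr ⟨j, ⟨hd, hne⟩, rfl⟩
      · rintro (rfl | ⟨j, ⟨hd, hne⟩, rfl⟩)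
        · exact Or.inl ⟨rfl, hp⟩
        · exact Or.inr ⟨j, hd, hne, rfl⟩
    rw [he, Finset.card_insert_of_notMem hnotmem, Finset.card_image_of_injective _ hinj]
  · rw [if_neg hp]
    have he : (Finset.univ.filter fun r' => dsc (ins σ p) r') =
        (Finset.univ.filter fun j : Fin n =>
          dsc σ j ∧ (j : ℕ) + 1 ≠ (p : ℕ)).image p.succAbove := by
      ext r'
      simp only [Finset.mem_filter, Finset.mem_univ, true_and,
        Finset.mem_image, dsc_ins_iff]
      constructor
      · rintro (⟨rfl, h⟩ | ⟨j, hd, hne, rfl⟩)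
        · exact absurd h hp
        · exact ⟨j, ⟨hd, hne⟩, rfl⟩
      · rintro ⟨j, ⟨hd, hne⟩, rfl⟩
        exact Or.inr ⟨j, hd, hne, rfl⟩
    rw [he, Finset.card_image_of_injective _ hinj]
    omega

lemma dsc_val_lt {n : ℕ} {σ : Equiv.Perm (Fin n)} {j : Fin n} (h : dsc σ j) :
    (j : ℕ) + 1 < n := by
  obtain ⟨s, hs, _⟩ := h
  have := s.isLt; omega

lemma des_split {n : ℕ} (σ : Equiv.Perm (Fin n)) (p : Fin (n + 1)) :
    des σ = (Finset.univ.filter fun j : Fin n => dsc σ j ∧ (j : ℕ) + 1 ≠ (p : ℕ)).card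
      + (Finset.univ.filter fun j : Fin n => dsc σ j ∧ (j : ℕ) + 1 = (p : ℕ)).card := by
  rw [des_eq]
  rw [← Finset.card_filter_add_card_filter_not
    (p := fun j : Fin n => (j : ℕ) + 1 ≠ (p : ℕ)) (s := Finset.univ.filter fun j => dsc σ j)]
  congr 1
  · rw [Finset.filter_filter]
  · rw [Finset.filter_filter]
    simp only [ne_eq, not_not]

lemma card_split_le_one {n : ℕ} (σ : Equiv.Perm (Fin n)) (p : Fin (n + 1)) :
    (Finset.univ.filter fun j : Fin n => dsc σ j ∧ (j : ℕ) + 1 = (p : ℕ)).card ≤ 1 := by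
  apply Finset.card_le_one.mpr
  intro a ha b hb
  simp only [Finset.mem_filter] at ha hb
  apply Fin.ext
  omega

lemma des_ins_of_neutral {n : ℕ} {σ : Equiv.Perm (Fin n)} {p : Fin (n + 1)}
    (h : (p : ℕ) = n ∨ ∃ j, dsc σ j ∧ (j : ℕ) + 1 = (p : ℕ)) :
    des (ins σ p) = des σ := by
  rw [des_ins, des_split σ p]
  rcases h with h | ⟨j, hj, hjp⟩
  · rw [if_neg (by omega)]
    have : (Finset.univ.filter fun j : Fin n => dsc σ j ∧ (j : ℕ) + 1 = (p : ℕ)) = ∅ := by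
      apply Finset.filter_false_of_mem
      intro j _
      rintro ⟨hd, he⟩
      have := dsc_val_lt hd
      omega
    rw [this]
    simp
  · have hp : (p : ℕ) < n := by have := dsc_val_lt hj; omega
    rw [if_pos hp]
    have h1 : (Finset.univ.filter fun j : Fin n => dsc σ j ∧ (j : ℕ) + 1 = (p : ℕ)).card = 1 := by
      refine le_antisymm (card_split_le_one σ p) ?_
      rw [Nat.one_le_iff_ne_zero, ← Nat.pos_iff_ne_zero, Finset.card_pos]
      exact ⟨j, Finset.mem_filter.mpr ⟨Finset.mem_univ _, hj, hjp⟩⟩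
    omega

lemma des_ins_of_not_neutral {n : ℕ} {σ : Equiv.Perm (Fin n)} {p : Fin (n + 1)}
    (h : ¬((p : ℕ) = n ∨ ∃ j, dsc σ j ∧ (j : ℕ) + 1 = (p : ℕ))) :
    des (ins σ p) = des σ + 1 := by
  push_neg at h
  obtain ⟨h1, h2⟩ := h
  have hp : (p : ℕ) < n := by have := p.isLt; omega
  rw [des_ins, des_split σ p, if_pos hp]
  have : (Finset.univ.filter fun j : Fin n => dsc σ j ∧ (j : ℕ) + 1 = (p : ℕ)) = ∅ := by
    apply Finset.filter_false_of_mem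
    intro j _
    rintro ⟨hd, he⟩
    exact h2 j hd he
  rw [this]
  simp

lemma des_le_card {n : ℕ} (σ : Equiv.Perm (Fin n)) : des σ ≤ n := by
  rw [des_eq]
  calc (Finset.univ.filter fun r => dsc σ r).card ≤ Finset.univ.card :=
        Finset.card_filter_le _ _
    _ = n := by simp

lemma card_neutral {n : ℕ} (σ : Equiv.Perm (Fin n)) :
    (Finset.univ.filter fun p : Fin (n + 1) =>
      (p : ℕ) = n ∨ ∃ j, dsc σ j ∧ (j : ℕ) + 1 = (p : ℕ)).card = des σ + 1 := by
  set g : Fin n → Fin (n + 1) := fun j => ⟨(j : ℕ) + 1, Nat.add_lt_add_right j.isLt 1⟩ with hg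
  have hginj : Function.Injective g := by
    intro a b hab
    apply Fin.ext
    have := congrArg Fin.val hab
    simpa [hg] using this
  have hnm : Fin.last n ∉ (Finset.univ.filter fun j : Fin n => dsc σ j).image g := by
    simp only [Finset.mem_image, Finset.mem_filter]
    rintro ⟨j, ⟨_, hj⟩, he2⟩
    have h1 := dsc_val_lt hj
    have h2 := congrArg Fin.val he2
    simp [hg, Fin.last] at h2
    omega
  have he : (Finset.univ.filter fun p : Fin (n + 1) =>
      (p : ℕ) = n ∨ ∃ j, dsc σ j ∧ (j : ℕ) + 1 = (p : ℕ)) =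
      insert (Fin.last n) ((Finset.univ.filter fun j : Fin n => dsc σ j).image g) := by
    ext p
    simp only [Finset.mem_filter, Finset.mem_univ, true_and, Finset.mem_insert, Finset.mem_image]
    constructor
    · rintro (h | ⟨j, hj, hjp⟩)
      · exact Or.inl (Fin.ext h)
      · exact Or.inr ⟨j, hj, Fin.ext (by simpa [hg] using hjp)⟩
    · rintro (rfl | ⟨j, hj, rfl⟩)
      · exact Or.inl rfl
      · exact Or.inr ⟨j, hj, rfl⟩
  rw [he, Finset.card_insert_of_notMem hnm, Finset.card_image_of_injective _ hginj, des_eq]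

lemma count_p {n : ℕ} (σ : Equiv.Perm (Fin n)) (m : ℕ) :
    (Finset.univ.filter fun p : Fin (n + 1) => des (ins σ p) = m).card =
      if m = des σ then des σ + 1
      else if m = des σ + 1 then n - des σ else 0 := by
  by_cases h1 : m = des σ
  · rw [if_pos h1]
    rw [← card_neutral σ]
    congr 1
    apply Finset.filter_congr
    intro p _
    subst h1
    constructor
    · intro hd
      by_contra hc
      rw [des_ins_of_not_neutral hc] at hd
      omega
    · intro hc
      exact des_ins_of_neutral hc
  · rw [if_neg h1]
    by_cases h2 : m = des σ + 1
    · rw [if_pos h2]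
      have key : (Finset.univ.filter fun p : Fin (n + 1) => des (ins σ p) = m) =
          Finset.univ.filter fun p : Fin (n + 1) =>
            ¬((p : ℕ) = n ∨ ∃ j, dsc σ j ∧ (j : ℕ) + 1 = (p : ℕ)) := by
        apply Finset.filter_congr
        intro p _
        subst h2
        constructor
        · intro hd
          intro hc
          rw [des_ins_of_neutral hc] at hd
          omega
        · intro hc
          exact des_ins_of_not_neutral hc
      rw [key]
      have := Finset.card_filter_add_card_filter_not
        (s := (Finset.univ : Finset (Fin (n + 1))))
        (p := fun p : Fin (n + 1) => (p : ℕ) = n ∨ ∃ j, dsc σ j ∧ (j : ℕ) + 1 = (p : ℕ))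
      rw [card_neutral σ] at this
      have hc : (Finset.univ : Finset (Fin (n + 1))).card = n + 1 := by simp
      have hd := des_le_card σ
      omega
    · rw [if_neg h2]
      rw [Finset.card_eq_zero]
      apply Finset.filter_false_of_mem
      intro p _
      intro hd
      by_cases hc : (p : ℕ) = n ∨ ∃ j, dsc σ j ∧ (j : ℕ) + 1 = (p : ℕ)
      · rw [des_ins_of_neutral hc] at hd; omega
      · rw [des_ins_of_not_neutral hc] at hd; omega

lemma apply_succAbove_ne_last {n : ℕ} (w : Equiv.Perm (Fin (n + 1))) (j : Fin n) :
    w ((w⁻¹ (Fin.last n)).succAbove j) ≠ Fin.last n := by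
  intro h
  have : (w⁻¹ (Fin.last n)).succAbove j = w⁻¹ (Fin.last n) := by
    have := congrArg (fun x => w⁻¹ x) h
    simpa using this
  exact Fin.succAbove_ne _ j this

noncomputable def res {n : ℕ} (w : Equiv.Perm (Fin (n + 1))) : Equiv.Perm (Fin n) :=
  Equiv.ofBijective
    (fun j => (w ((w⁻¹ (Fin.last n)).succAbove j)).castPred (apply_succAbove_ne_last w j))
    (Finite.injective_iff_bijective.mp (by
      intro a b hab
      have h2 := congrArg Fin.castSucc hab
      rw [Fin.castSucc_castPred, Fin.castSucc_castPred] at h2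
      exact Fin.succAbove_right_injective (w.injective h2)))

lemma res_apply {n : ℕ} (w : Equiv.Perm (Fin (n + 1))) (j : Fin n) :
    (res w j).castSucc = w ((w⁻¹ (Fin.last n)).succAbove j) := by
  have h : res w j = (w ((w⁻¹ (Fin.last n)).succAbove j)).castPred
      (apply_succAbove_ne_last w j) := rfl
  rw [h, Fin.castSucc_castPred]

noncomputable def Φ {n : ℕ} : Equiv.Perm (Fin n) × Fin (n + 1) ≃ Equiv.Perm (Fin (n + 1)) where
  toFun q := ins q.1 q.2
  invFun w := (res w, w⁻¹ (Fin.last n))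
  left_inv := by
    rintro ⟨σ, p⟩
    have hp : (ins σ p)⁻¹ (Fin.last n) = p := by
      rw [Equiv.Perm.inv_def, Equiv.symm_apply_eq]
      exact (ins_apply_same σ p).symm
    refine Prod.ext ?_ hp
    · apply Equiv.ext
      intro j
      apply Fin.castSucc_injective
      rw [res_apply, hp, ins_apply_succAbove]
  right_inv := by
    intro w
    apply Equiv.ext
    intro i
    rcases eq_or_ne i (w⁻¹ (Fin.last n)) with rfl | hi
    · rw [ins_apply_same]
      simp
    · obtain ⟨j, rfl⟩ := Fin.exists_succAbove_eq hi
      rw [ins_apply_succAbove, res_apply]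

lemma A_succ (n m : ℕ) : A (n + 1) m =
    ∑ σ : Equiv.Perm (Fin n),
      (Finset.univ.filter fun p : Fin (n + 1) => des (ins σ p) = m).card := by
  have h1 : A (n + 1) m =
      (Finset.univ.filter fun q : Equiv.Perm (Fin n) × Fin (n + 1) =>
        des (ins q.1 q.2) = m).card := by
    rw [A]
    refine (Finset.card_equiv Φ ?_).symm
    intro q
    simp only [Finset.mem_filter, Finset.mem_univ, true_and]
    exact Iff.rfl
  rw [h1, Finset.card_filter, Fintype.sum_prod_type]
  refine Finset.sum_congr rfl fun σ _ => ?_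
  rw [Finset.card_filter]

lemma sum_ite_card {n : ℕ} (P : Equiv.Perm (Fin n) → Prop) [DecidablePred P] (c : ℕ) :
    (∑ σ : Equiv.Perm (Fin n), if P σ then c else 0) =
      c * (Finset.univ.filter fun σ => P σ).card := by
  rw [← Finset.sum_filter, Finset.sum_const, smul_eq_mul, mul_comm]

lemma A_rec (n k : ℕ) : A (n + 1) (k + 1) = (k + 2) * A n (k + 1) + (n - k) * A n k := by
  rw [A_succ]
  have key : ∀ σ : Equiv.Perm (Fin n),
      (Finset.univ.filter fun p : Fin (n + 1) => des (ins σ p) = k + 1).card =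
      (if des σ = k + 1 then k + 2 else 0) + (if des σ = k then n - k else 0) := by
    intro σ
    rw [count_p]
    by_cases h1 : des σ = k + 1
    · rw [if_pos h1.symm, if_pos h1, if_neg (by omega), h1]
    · rw [if_neg (fun h => h1 h.symm), if_neg h1]
      by_cases h2 : des σ = k
      · rw [if_pos (by omega), if_pos h2, h2]; omega
      · rw [if_neg (by omega), if_neg h2]
  rw [Finset.sum_congr rfl (fun σ _ => key σ), Finset.sum_add_distrib,
    sum_ite_card, sum_ite_card]
  rfl

lemma A_rec0 (n : ℕ) : A (n + 1) 0 = A n 0 := by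
  rw [A_succ]
  have key : ∀ σ : Equiv.Perm (Fin n),
      (Finset.univ.filter fun p : Fin (n + 1) => des (ins σ p) = 0).card =
      (if des σ = 0 then 1 else 0) := by
    intro σ
    rw [count_p]
    by_cases h1 : des σ = 0
    · rw [if_pos h1.symm, if_pos h1, h1]
    · rw [if_neg (fun h => h1 h.symm), if_neg (by omega), if_neg h1]
  rw [Finset.sum_congr rfl (fun σ _ => key σ), sum_ite_card, one_mul]
  rfl

lemma dsc_subset_Sall {n : ℕ} (w : Equiv.Perm (Fin n)) :
    (Finset.univ.filter fun r => dsc w r) ⊆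
      (Finset.univ.filter fun r : Fin n => (r : ℕ) + 1 < n) := by
  intro r hr
  simp only [Finset.mem_filter, Finset.mem_univ, true_and] at hr ⊢
  exact dsc_val_lt hr

lemma card_Sall (n : ℕ) :
    (Finset.univ.filter fun r : Fin n => (r : ℕ) + 1 < n).card = n - 1 := by
  cases n with
  | zero => simp
  | succ m =>
    have : (Finset.univ.filter fun r : Fin (m + 1) => (r : ℕ) + 1 < m + 1) =
        Finset.univ.erase (Fin.last m) := by
      rw [← Finset.filter_ne']
      apply Finset.filter_congr
      intro r _
      rw [← Fin.lt_last_iff_ne_last, Fin.lt_def, Fin.val_last]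
      omega
    rw [this, Finset.card_erase_of_mem (Finset.mem_univ _)]
    simp

lemma des_le {n : ℕ} (w : Equiv.Perm (Fin n)) : des w ≤ n - 1 := by
  rw [des_eq, ← card_Sall n]
  exact Finset.card_le_card (dsc_subset_Sall w)

lemma des_revComp {n : ℕ} (w : Equiv.Perm (Fin n)) :
    des (w.trans Fin.revPerm) = (n - 1) - des w := by
  have key : (Finset.univ.filter fun r => dsc (w.trans Fin.revPerm) r) =
      (Finset.univ.filter fun r : Fin n => (r : ℕ) + 1 < n) \
        (Finset.univ.filter fun r => dsc w r) := by
    ext r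
    simp only [Finset.mem_filter, Finset.mem_univ, true_and, Finset.mem_sdiff]
    constructor
    · rintro ⟨s, hs, hlt⟩
      simp only [Equiv.trans_apply, Fin.revPerm_apply, Fin.rev_lt_rev] at hlt
      refine ⟨by have := s.isLt; omega, ?_⟩
      rintro ⟨s', hs', hlt'⟩
      have : s' = s := Fin.ext (by omega)
      subst this
      exact absurd hlt' (not_lt.2 hlt.le)
    · rintro ⟨hr, hnd⟩
      refine ⟨⟨(r : ℕ) + 1, hr⟩, rfl, ?_⟩
      simp only [Equiv.trans_apply, Fin.revPerm_apply, Fin.rev_lt_rev]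
      rcases lt_trichotomy (w r) (w ⟨(r : ℕ) + 1, hr⟩) with h | h | h
      · exact h
      · exact absurd (w.injective h.symm) (by intro hc; rw [Fin.ext_iff] at hc; simp at hc)
      · exact absurd ⟨⟨(r : ℕ) + 1, hr⟩, rfl, h⟩ hnd
  rw [des_eq, key, Finset.card_sdiff_of_subset (dsc_subset_Sall w), card_Sall, ← des_eq]

/-- the reversal involution on permutations -/
def revInv {n : ℕ} : Equiv.Perm (Fin n) ≃ Equiv.Perm (Fin n) where
  toFun w := w.trans Fin.revPerm
  invFun w := w.trans Fin.revPerm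
  left_inv w := by apply Equiv.ext; intro i; simp [Fin.rev_rev]
  right_inv w := by apply Equiv.ext; intro i; simp [Fin.rev_rev]

lemma A_symm {n : ℕ} (k : ℕ) (hk : k ≤ n - 1) : A n k = A n (n - 1 - k) := by
  rw [A, A]
  apply Finset.card_equiv revInv
  intro w
  simp only [Finset.mem_filter, Finset.mem_univ, true_and]
  have h1 : des (revInv w) = (n - 1) - des w := des_revComp w
  have h2 := des_le w
  have h3 := des_le (revInv (n := n) w)
  constructor
  · intro h; omega
  · intro h; omega

lemma A_mono : ∀ n k : ℕ, 2 * (k + 1) ≤ n → A n k ≤ A n (k + 1) := by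
  intro n
  induction n with
  | zero => intro k h; omega
  | succ n ih =>
    intro k hk
    cases k with
    | zero =>
      have hn : 1 ≤ n := by omega
      rw [A_rec0, A_rec n 0]
      simp only [Nat.sub_zero]
      calc A n 0 ≤ n * A n 0 := Nat.le_mul_of_pos_left _ hn
        _ ≤ 2 * A n 1 + n * A n 0 := Nat.le_add_left _ _
    | succ k' =>
      rw [A_rec n k', A_rec n (k' + 1)]
      have hd1 : n - k' = (n - (k' + 1)) + 1 := by omega
      set a := A n k' with ha
      set b := A n (k' + 1) with hb
      set c := A n (k' + 2) with hc
      set d := n - (k' + 1) with hdd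
      rw [show n - k' = d + 1 from hd1]
      show (k' + 2) * b + (d + 1) * a ≤ (k' + 3) * c + d * b
      by_cases hcase : 2 * (k' + 2) ≤ n
      · have h1 : a ≤ b := ih k' (by omega)
        have h2 : b ≤ c := ih (k' + 1) hcase
        calc (k' + 2) * b + (d + 1) * a
            ≤ (k' + 2) * c + (d + 1) * b :=
              Nat.add_le_add (Nat.mul_le_mul_left _ h2) (Nat.mul_le_mul_left _ h1)
          _ = (k' + 2) * c + d * b + b := by ring
          _ ≤ (k' + 2) * c + d * b + c := Nat.add_le_add_left h2 _
          _ = (k' + 3) * c + d * b := by ring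
      · have hn : n = 2 * k' + 3 := by omega
        have hsym : c = a := by
          rw [hc, ha, A_symm (k' + 2) (by omega)]
          congr 1
          omega
        have hd2 : d = k' + 2 := by omega
        rw [hsym, hd2]
        exact le_of_eq (by ring)

end EulerAux

/-- Unimodality of the Eulerian numbers: they increase up to `i = ⌈n/2⌉`
(which is `(n+1)/2` in natural number arithmetic) and decrease afterwards. -/
theorem eulerianNum_unimodal (n : ℕ) (hn : 1 ≤ n) :
    (∀ i, 1 ≤ i → i < (n + 1) / 2 → eulerianNum n i ≤ eulerianNum n (i + 1)) ∧
    (∀ i, (n + 1) / 2 ≤ i → i < n → eulerianNum n (i + 1) ≤ eulerianNum n i) := by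
  open EulerAux in
  constructor
  · intro i h1 h2
    rw [eulerianNum_eq, eulerianNum_eq]
    have h := A_mono n (i - 1) (by omega)
    rw [Nat.sub_add_cancel h1] at h
    have e : i + 1 - 1 = i := by omega
    rw [e]
    exact h
  · intro i h1 h2
    rw [eulerianNum_eq, eulerianNum_eq]
    have e : i + 1 - 1 = i := by omega
    rw [e]
    have e1 : A n i = A n (n - 1 - i) := A_symm i (by omega)
    have e2 : A n (i - 1) = A n (n - i) := by
      rw [A_symm (i - 1) (by omega)]
      congr 1
      omega
    have h := A_mono n (n - 1 - i) (by omega)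
    have e3 : n - 1 - i + 1 = n - i := by omega
    rw [e3] at h
    rw [e1, e2]
    exact h
end

section
/- For every n ≥ 1, the following identity of formal power series in two variables s and t holds: A_n(s,t) = (1-s)^{n+1}·(1-t)^{n+1} · Σ_{k,l≥0} C(kl+n-1, n) s^k t^l, where A_n(s,t) = Σ_{w ∈ S_n} s^{des(w⁻¹)+1} t^{des(w)+1} is the n-th two-sided Eulerian polynomial. Equivalently, A_n(s,t) / ((1-s)^{n+1}(1-t)^{n+1}) = Σ_{k,l≥0} C(kl+n-1, n) s^k t^l. -/
/-- The `n`-th two-sided Eulerian polynomial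
`A_n(s,t) = ∑_{w ∈ S_n} s^{des(w⁻¹)+1} t^{des(w)+1}`, viewed as a formal
power series in two variables `s = X 0`, `t = X 1`. -/
noncomputable def twoSidedEulerian (n : ℕ) : MvPowerSeries (Fin 2) ℤ :=
  ∑ w : Equiv.Perm (Fin n),
    (MvPowerSeries.X 0 : MvPowerSeries (Fin 2) ℤ) ^ (des w⁻¹ + 1) *
      (MvPowerSeries.X 1 : MvPowerSeries (Fin 2) ℤ) ^ (des w + 1)

/-- The power series `∑_{k,l ≥ 0} C(kl+n-1, n) s^k t^l`, where `s = X 0` and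
`t = X 1`: its coefficient on the monomial `s^k t^l` is `C(kl+n-1, n)`. -/
def ballsInBoxesSeries (n : ℕ) : MvPowerSeries (Fin 2) ℤ :=
  fun d : Fin 2 →₀ ℕ => (Nat.choose (d 0 * d 1 + n - 1) n : ℤ)

open Finset

theorem mono_of_consec {n : ℕ} {β : Type*} [Preorder β] (f : Fin n → β)
    (h : ∀ r s : Fin n, (s : ℕ) = (r : ℕ) + 1 → f r ≤ f s) : Monotone f := by
  have key : ∀ t : ℕ, ∀ i j : Fin n, (j : ℕ) = (i : ℕ) + t → f i ≤ f j := by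
    intro t
    induction t with
    | zero => intro i j hj; exact le_of_eq (congrArg f (Fin.ext hj.symm))
    | succ t ih =>
      intro i j hj
      have hj' : (i : ℕ) + t < n := by omega
      exact (ih i ⟨i + t, hj'⟩ rfl).trans (h ⟨i + t, hj'⟩ j (by show (j : ℕ) = (i : ℕ) + t + 1; omega))
  intro i j hij
  exact key ((j : ℕ) - (i : ℕ)) i j (by omega)

theorem plateau {n : ℕ} {β : Type*} [PartialOrder β] (c : Fin n → β) (σ : Fin n → Fin n)
    (hc : Monotone c)
    (hstep : ∀ r s : Fin n, (s : ℕ) = (r : ℕ) + 1 → c r = c s → σ r < σ s) :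
    ∀ i j : Fin n, i < j → c i = c j → σ i < σ j := by
  have key : ∀ t : ℕ, ∀ i j : Fin n, (j : ℕ) = (i : ℕ) + t + 1 → c i = c j → σ i < σ j := by
    intro t
    induction t with
    | zero => intro i j hj hcij; exact hstep i j (by omega) hcij
    | succ t ih =>
      intro i j hj hcij
      have hm : (i : ℕ) + 1 < n := by omega
      set m : Fin n := ⟨i + 1, hm⟩ with hmdef
      have him : i ≤ m := by simp [Fin.le_def, hmdef]
      have hmj : m ≤ j := by simp [Fin.le_def, hmdef]; omega
      have h1 : c i = c m := le_antisymm (hc him) (hcij ▸ hc hmj)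
      exact (hstep i m rfl h1).trans (ih m j (by simp [hmdef]; omega) (h1 ▸ hcij))
  intro i j hij hcij
  exact key ((j : ℕ) - (i : ℕ) - 1) i j (by have := Fin.lt_def.mp hij; omega) hcij

theorem card_monotone_maps (β : Type*) [LinearOrder β] [Fintype β] (n : ℕ) :
    (univ.filter fun f : Fin n → β => Monotone f).card =
      (Fintype.card β + n - 1).choose n := by
  classical
  have h1 : (univ.filter fun f : Fin n → β => Monotone f).card =
      (univ : Finset (Sym β n)).card := by
    apply Finset.card_nbij' (i := fun f => (⟨(List.ofFn f : Multiset β), by simp⟩ : Sym β n))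
      (j := fun s : Sym β n => fun i => (s.1.sort (· ≤ ·))[(i : ℕ)]'(by
        rw [Multiset.length_sort, s.2]; exact i.isLt))
    · intro f hf; exact @Finset.mem_univ (Sym β n) _ _
    · intro s _
      simp only [mem_coe, mem_filter, mem_univ, true_and]
      intro i j hij
      rcases eq_or_lt_of_le hij with rfl | hlt
      · exact le_rfl
      · have hs : (s.1.sort (· ≤ ·)).Pairwise (· ≤ ·) := Multiset.pairwise_sort _ _
        exact List.pairwise_iff_getElem.mp hs _ _ _ _ (by simpa using hlt)
    · intro f hf
      simp only [mem_coe, mem_filter, mem_univ, true_and] at hf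
      funext i
      have hperm : (Multiset.sort ((List.ofFn f : Multiset β)) (· ≤ ·)) = List.ofFn f := by
        apply List.Perm.eq_of_pairwise' (Multiset.pairwise_sort _ _) hf.sortedLE_ofFn.pairwise
        rw [← Multiset.coe_eq_coe, Multiset.sort_eq]
      simp only [List.getElem_of_eq hperm, List.getElem_ofFn]
    · intro s _
      apply Subtype.ext
      simp only
      rw [show (List.ofFn fun i : Fin n => (s.1.sort (· ≤ ·))[(i : ℕ)]'(by
          rw [Multiset.length_sort, s.2]; exact i.isLt)) = s.1.sort (· ≤ ·) from ?_,
        Multiset.sort_eq]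
      apply List.ext_getElem (by simp [s.2])
      intro i h1 h2
      simp
  exact h1.trans (by rw [card_univ, Sym.card_sym_eq_multichoose, Nat.multichoose_eq])

/-- number of elements of `D` below `x` -/
def eD (D : Finset ℕ) (x : ℕ) : ℕ := (D.filter (· < x)).card

theorem eD_zero (D : Finset ℕ) : eD D 0 = 0 := by simp [eD]

theorem eD_succ (D : Finset ℕ) (x : ℕ) :
    eD D (x + 1) = eD D x + if x ∈ D then 1 else 0 := by
  unfold eD
  split_ifs with h
  · rw [show D.filter (· < x + 1) = insert x (D.filter (· < x)) from ?_]
    · rw [card_insert_of_notMem (by simp), add_comm]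
    · ext y; simp only [mem_insert, mem_filter]; constructor
      · rintro ⟨hy, hlt⟩
        rcases Nat.lt_or_ge y x with h' | h'
        · exact Or.inr ⟨hy, h'⟩
        · exact Or.inl (by omega)
      · rintro (rfl | ⟨hy, hlt⟩)
        · exact ⟨h, by omega⟩
        · exact ⟨hy, by omega⟩
  · congr 1
    ext y; simp only [mem_filter]
    constructor
    · rintro ⟨hy, hlt⟩; refine ⟨hy, ?_⟩; rcases Nat.lt_or_ge y x with h' | h'
      · exact h'
      · exfalso; exact h (by rwa [show y = x by omega] at hy)
    · rintro ⟨hy, hlt⟩; exact ⟨hy, by omega⟩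

theorem eD_mono (D : Finset ℕ) {x y : ℕ} (h : x ≤ y) : eD D x ≤ eD D y := by
  apply card_le_card
  apply monotone_filter_right
  intro a _ ha
  exact lt_of_lt_of_le ha h

theorem eD_le_card (D : Finset ℕ) (x : ℕ) : eD D x ≤ D.card := card_le_card (filter_subset _ _)

theorem eD_all (D : Finset ℕ) (x : ℕ) (hD : ∀ r ∈ D, r < x) : eD D x = D.card := by
  unfold eD; congr 1; apply filter_true_of_mem; intro a ha; simpa using hD a ha

/-- monotone maps `Fin n → Fin m` which increase strictly at positions in `D` -/
def chainSet (n m : ℕ) (D : Finset ℕ) : Finset (Fin n → Fin m) :=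
  univ.filter fun f => Monotone f ∧
    ∀ r s : Fin n, (s : ℕ) = (r : ℕ) + 1 → (r : ℕ) ∈ D → f r < f s

theorem chainSet_keyIneq {n m : ℕ} {D : Finset ℕ} {f : Fin n → Fin m}
    (hf : f ∈ chainSet n m D) :
    ∀ i j : Fin n, (i : ℕ) ≤ (j : ℕ) →
      (f i : ℕ) + eD D (j : ℕ) ≤ (f j : ℕ) + eD D (i : ℕ) := by
  rw [chainSet, mem_filter] at hf
  obtain ⟨-, hmono, hstrict⟩ := hf
  have key : ∀ t : ℕ, ∀ i j : Fin n, (j : ℕ) = (i : ℕ) + t →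
      (f i : ℕ) + eD D (j : ℕ) ≤ (f j : ℕ) + eD D (i : ℕ) := by
    intro t
    induction t with
    | zero => intro i j hj; have : j = i := Fin.ext (by omega); subst this; omega
    | succ t ih =>
      intro i j hj
      have hj' : (i : ℕ) + t < n := by omega
      set j' : Fin n := ⟨(i : ℕ) + t, hj'⟩ with hj'def
      have h1 := ih i j' rfl
      have h2 : eD D (j : ℕ) = eD D (j' : ℕ) + if ((i : ℕ) + t) ∈ D then 1 else 0 := by
        rw [hj]; exact eD_succ D _
      have h3 : (f j' : ℕ) + (if ((i : ℕ) + t) ∈ D then 1 else 0) ≤ (f j : ℕ) := by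
        split_ifs with hmem
        · have := hstrict j' j (by simp [hj'def]; omega) (by simpa [hj'def] using hmem)
          rw [Fin.lt_def] at this; omega
        · have : f j' ≤ f j := hmono (by rw [Fin.le_def]; simp [hj'def]; omega)
          rw [Fin.le_def] at this; omega
      omega
  intro i j hij
  exact key ((j : ℕ) - (i : ℕ)) i j (by omega)

theorem card_chainSet (n m : ℕ) (hn : 1 ≤ n) (D : Finset ℕ) (hD : ∀ r ∈ D, r + 1 < n) :
    (chainSet n m D).card = (n + m - (D.card + 1)).choose n := by
  set d := D.card with hd
  have hlast : (n : ℕ) - 1 < n := by omega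
  set last : Fin n := ⟨n - 1, hlast⟩ with hlastdef
  have heDlast : eD D ((last : Fin n) : ℕ) = d :=
    eD_all D _ (fun r hr => by have := hD r hr; simp [hlastdef]; omega)
  have hfm : ∀ (f : Fin n → Fin m), f ∈ chainSet n m D → ∀ i : Fin n,
      eD D (i : ℕ) ≤ (f i : ℕ) ∧ (f i : ℕ) + d ≤ (f last : ℕ) + eD D (i : ℕ) := by
    intro f hf i
    have hz : (0 : ℕ) < n := by omega
    have h1 := chainSet_keyIneq hf ⟨0, hz⟩ i (Nat.zero_le _)
    have h2 := chainSet_keyIneq hf i last (by simp [hlastdef]; omega)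
    rw [show ((⟨0, hz⟩ : Fin n) : ℕ) = 0 from rfl, eD_zero] at h1
    exact ⟨by omega, by rw [heDlast] at h2; omega⟩
  rcases Nat.lt_or_ge m (d + 1) with hm | hm
  · rw [Nat.choose_eq_zero_of_lt (by omega), Finset.card_eq_zero,
      Finset.eq_empty_iff_forall_notMem]
    intro f hf
    have hz : (0 : ℕ) < n := by omega
    have h1 := (hfm f hf ⟨0, hz⟩).2
    have h2 := (hfm f hf ⟨0, hz⟩).1
    have h3 : (f last : ℕ) < m := (f last).isLt
    rw [show ((⟨0, hz⟩ : Fin n) : ℕ) = 0 from rfl, eD_zero] at h1 h2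
    omega
  · have hcard : (chainSet n m D).card =
        (univ.filter fun g : Fin n → Fin (m - d) => Monotone g).card := by
      apply Finset.card_nbij'
        (i := fun f => fun i : Fin n =>
          (⟨min ((f i : ℕ) - eD D (i : ℕ)) (m - d - 1), by omega⟩ : Fin (m - d)))
        (j := fun g => fun i : Fin n => (⟨(g i : ℕ) + eD D (i : ℕ), by
          have h1 := (g i).isLt; have h2 := eD_le_card D (i : ℕ); omega⟩ : Fin m))
      · -- maps into monotone
        intro f hf
        simp only [mem_coe, mem_filter, mem_univ, true_and]
        intro i j hij
        have hbi := hfm f hf i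
        have hbj := hfm f hf j
        have hkey := chainSet_keyIneq hf i j (Fin.le_def.mp hij)
        have h3 : (f last : ℕ) < m := (f last).isLt
        rw [Fin.mk_le_mk]
        omega
      · -- maps into chainSet
        intro g hg
        simp only [mem_coe, mem_filter, mem_univ, true_and] at hg
        rw [mem_coe, chainSet, mem_filter]
        refine ⟨mem_univ _, ?_, ?_⟩
        · intro i j hij
          have h1 : g i ≤ g j := hg hij
          rw [Fin.le_def] at h1 ⊢
          have h2 := eD_mono D (Fin.le_def.mp hij)
          simp only
          omega
        · intro r s hs hr
          have h1 : g r ≤ g s := hg (by rw [Fin.le_def]; omega)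
          rw [Fin.le_def] at h1
          have h2 : eD D (s : ℕ) = eD D (r : ℕ) + 1 := by
            rw [hs, eD_succ, if_pos hr]
          rw [Fin.lt_def]
          simp only
          omega
      · -- left inverse
        intro f hf
        funext i
        have hbi := hfm f hf i
        have h3 : (f last : ℕ) < m := (f last).isLt
        apply Fin.ext
        simp only
        omega
      · -- right inverse
        intro g hg
        funext i
        have h1 := (g i).isLt
        apply Fin.ext
        simp only
        omega
    rw [hcard, card_monotone_maps, Fintype.card_fin]
    congr 1
    omega

def desQ {n : ℕ} (w : Equiv.Perm (Fin n)) : ℕ :=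
  (Finset.univ.filter fun r : Fin n =>
    ∃ s : Fin n, (s : ℕ) = (r : ℕ) + 1 ∧ w s < w r).card

/-- the descent set of a permutation, as a set of natural numbers -/
def dset {n : ℕ} (w : Equiv.Perm (Fin n)) : Finset ℕ :=
  (Finset.univ.filter fun r : Fin n =>
    ∃ s : Fin n, (s : ℕ) = (r : ℕ) + 1 ∧ w s < w r).image Fin.val

theorem card_dset {n : ℕ} (w : Equiv.Perm (Fin n)) : (dset w).card = desQ w := by
  rw [dset, card_image_of_injective _ Fin.val_injective]; rfl

theorem mem_dset {n : ℕ} (w : Equiv.Perm (Fin n)) (r : Fin n) :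
    (r : ℕ) ∈ dset w ↔ ∃ s : Fin n, (s : ℕ) = (r : ℕ) + 1 ∧ w s < w r := by
  rw [dset, mem_image]
  constructor
  · rintro ⟨r', hr', hval⟩
    rw [mem_filter] at hr'
    rw [show r = r' from Fin.ext hval.symm]
    exact hr'.2
  · intro h
    exact ⟨r, mem_filter.mpr ⟨mem_univ _, h⟩, rfl⟩

theorem dset_bound {n : ℕ} (w : Equiv.Perm (Fin n)) :
    ∀ x ∈ dset w, x + 1 < n := by
  intro x hx
  rw [dset, mem_image] at hx
  obtain ⟨r, hr, rfl⟩ := hx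
  rw [mem_filter] at hr
  obtain ⟨-, s, hs, -⟩ := hr
  have := s.isLt
  omega

theorem Equiv.Perm.apply_inv_self {α : Type*} (f : Equiv.Perm α) (x : α) : f (f⁻¹ x) = x :=
  Equiv.apply_symm_apply f x

theorem Equiv.Perm.inv_apply_self {α : Type*} (f : Equiv.Perm α) (x : α) : f⁻¹ (f x) = x :=
  Equiv.symm_apply_apply f x

theorem keyCount (n k l : ℕ) (hn : 1 ≤ n) :
    (k * l + n - 1).choose n =
      ∑ σ : Equiv.Perm (Fin n),
        ((n + k - (desQ σ⁻¹ + 1)).choose n) * ((n + l - (desQ σ + 1)).choose n) := by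
  classical
  have hcb : Fintype.card (Lex (Fin k × Fin l)) = k * l := by
    rw [Fintype.card_congr (ofLex : Lex (Fin k × Fin l) ≃ (Fin k × Fin l))]
    simp
  rw [← hcb]
  rw [← card_monotone_maps (Lex (Fin k × Fin l)) n]
  rw [Finset.card_eq_sum_card_fiberwise
    (f := fun p : Fin n → Lex (Fin k × Fin l) => Tuple.sort (fun i => (ofLex (p i)).2))
    (t := univ) (fun _ _ => mem_univ _)]
  apply Finset.sum_congr rfl
  intro σ _
  rw [← card_dset σ⁻¹, ← card_dset σ,
    ← card_chainSet n k hn (dset σ⁻¹) (dset_bound σ⁻¹),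
    ← card_chainSet n l hn (dset σ) (dset_bound σ),
    ← Finset.card_product]
  apply Finset.card_nbij'
    (i := fun p => (fun i : Fin n => (ofLex (p i)).1, fun r : Fin n => (ofLex (p (σ r))).2))
    (j := fun ac => fun i : Fin n => toLex (ac.1 i, ac.2 (σ⁻¹ i)))
  · -- forward map lands in product
    intro p hp
    rw [mem_coe, mem_filter, mem_filter] at hp
    obtain ⟨⟨-, hmono⟩, hsort⟩ := hp
    set b : Fin n → Fin l := fun i => (ofLex (p i)).2 with hbdef
    set a : Fin n → Fin k := fun i => (ofLex (p i)).1 with hadef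
    obtain ⟨hbm, hstab⟩ := Tuple.eq_sort_iff.mp hsort.symm
    have F1 : ∀ i j : Fin n, i ≤ j → a i < a j ∨ (a i = a j ∧ b i ≤ b j) := by
      intro i j hij
      have := hmono hij
      rw [show p i = toLex (ofLex (p i)) from rfl, show p j = toLex (ofLex (p j)) from rfl,
        Prod.Lex.le_iff] at this
      exact this.imp id (fun h => ⟨h.1, h.2⟩)
    rw [mem_coe, Finset.mem_product]
    constructor
    · -- a ∈ chainSet n k (dset σ⁻¹)
      rw [chainSet, mem_filter]
      refine ⟨mem_univ _, ?_, ?_⟩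
      · intro i j hij
        rcases F1 i j hij with h | h
        · exact le_of_lt h
        · exact le_of_eq h.1
      · intro r s hs hrD
        rw [mem_dset] at hrD
        obtain ⟨s', hs', hσ0⟩ := hrD
        have hσ : σ⁻¹ s < σ⁻¹ r := by
          rwa [show s' = s from Fin.ext (by omega)] at hσ0
        rcases F1 r s (by rw [Fin.le_def]; omega) with h | ⟨hae, hbe⟩
        · exact h
        · exfalso
          have h1 : b s ≤ b r := by
            have := hbm (le_of_lt hσ)
            simpa [Equiv.Perm.apply_inv_self] using this
          have h2 : b s = b r := le_antisymm h1 hbe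
          have h3 := hstab (σ⁻¹ s) (σ⁻¹ r) hσ (by simpa [Equiv.Perm.apply_inv_self] using h2)
          simp only [Equiv.Perm.apply_inv_self] at h3
          rw [Fin.lt_def] at h3
          omega
    · -- c ∈ chainSet n l (dset σ)
      rw [chainSet, mem_filter]
      refine ⟨mem_univ _, ?_, ?_⟩
      · intro i j hij
        exact hbm hij
      · intro r s hs hrD
        rw [mem_dset] at hrD
        obtain ⟨s', hs', hσ0⟩ := hrD
        have hσ : σ s < σ r := by
          rwa [show s' = s from Fin.ext (by omega)] at hσ0
        have hrs : r < s := by rw [Fin.lt_def]; omega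
        rcases lt_or_eq_of_le (hbm (le_of_lt hrs) : b (σ r) ≤ b (σ s)) with h | h
        · exact h
        · exfalso
          have := hstab r s hrs (by simpa using h)
          exact absurd hσ (not_lt.mpr (le_of_lt this))
  · -- backward map lands in fiber
    intro ac hac
    rw [mem_coe, Finset.mem_product] at hac
    obtain ⟨ha, hc⟩ := hac
    rw [chainSet, mem_filter] at ha hc
    obtain ⟨-, ham, has⟩ := ha
    obtain ⟨-, hcm, hcs⟩ := hc
    set a : Fin n → Fin k := ac.1
    set c : Fin n → Fin l := ac.2
    set b : Fin n → Fin l := fun i => c (σ⁻¹ i) with hbdef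
    have C1 : ∀ r s : Fin n, (s : ℕ) = (r : ℕ) + 1 → b s < b r → a r < a s := by
      intro r s hs hb
      have h1 : σ⁻¹ s < σ⁻¹ r := by
        by_contra hcon
        rw [not_lt] at hcon
        exact absurd (hcm hcon) (not_le.mpr hb)
      exact has r s hs ((mem_dset σ⁻¹ r).mpr ⟨s, hs, h1⟩)
    rw [mem_coe, mem_filter, mem_filter]
    refine ⟨⟨mem_univ _, ?_⟩, ?_⟩
    · -- Monotone p
      apply mono_of_consec
      intro r s hs
      show (toLex (a r, b r) : Lex (Fin k × Fin l)) ≤ toLex (a s, b s)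
      rw [show (toLex (a r, b r) : Lex (Fin k × Fin l)) = toLex (ofLex (toLex (a r, b r))) from rfl]
      rw [Prod.Lex.le_iff]
      simp only [ofLex_toLex]
      rcases lt_or_eq_of_le (ham (le_of_lt (show r < s by rw [Fin.lt_def]; omega))) with h | h
      · exact Or.inl h
      · refine Or.inr ⟨h, ?_⟩
        by_contra hb
        rw [not_le] at hb
        exact absurd (C1 r s hs hb) (not_lt.mpr (le_of_eq h.symm))
    · -- sort = σ
      symm
      rw [Tuple.eq_sort_iff]
      constructor
      · intro i j hij
        show b (σ i) ≤ b (σ j)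
        rw [hbdef]
        simp only [Equiv.Perm.inv_apply_self]
        exact hcm hij
      · intro i j hij hbe
        have hbe' : c i = c j := by
          have h2 : b (σ i) = b (σ j) := hbe
          rw [hbdef] at h2
          simpa [Equiv.Perm.inv_apply_self] using h2
        refine plateau c σ hcm ?_ i j hij hbe'
        intro r s hs hcrs
        rcases lt_trichotomy (σ r) (σ s) with h | h | h
        · exact h
        · exact absurd (σ.injective h) (by intro hh; rw [hh] at hs; omega)
        · exfalso
          have : (r : ℕ) ∈ dset σ := (mem_dset σ r).mpr ⟨s, hs, h⟩
          exact absurd hcrs (ne_of_lt (hcs r s hs this))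
  · -- left inverse
    intro p hp
    funext i
    show toLex ((ofLex (p i)).1, (ofLex (p (σ (σ⁻¹ i)))).2) = p i
    rw [Equiv.Perm.apply_inv_self]
    rfl
  · -- right inverse
    intro ac hac
    apply Prod.ext
    · rfl
    · funext r
      show (ofLex (toLex (ac.1 (σ r), ac.2 (σ⁻¹ (σ r))))).2 = ac.2 r
      rw [Equiv.Perm.inv_apply_self]
      rfl

namespace TwoSidedAux

open MvPowerSeries

/-- power series in `s = X 0` only, with coefficient function `φ` -/
def pureS (φ : ℕ → ℤ) : MvPowerSeries (Fin 2) ℤ :=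
  fun d => if d 1 = 0 then φ (d 0) else 0

/-- power series in `t = X 1` only, with coefficient function `φ` -/
def pureT (φ : ℕ → ℤ) : MvPowerSeries (Fin 2) ℤ :=
  fun d => if d 0 = 0 then φ (d 1) else 0

theorem coeff_apply' (F : MvPowerSeries (Fin 2) ℤ) (d : Fin 2 →₀ ℕ) :
    MvPowerSeries.coeff d F = F d := rfl

theorem fin2_ext {d e : Fin 2 →₀ ℕ} (h0 : d 0 = e 0) (h1 : d 1 = e 1) : d = e := by
  ext a
  fin_cases a
  · exact h0
  · exact h1

theorem mul_pureS (φ ψ : ℕ → ℤ) :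
    pureS φ * pureS ψ =
      pureS (fun x => ∑ i ∈ Finset.range (x + 1), φ i * ψ (x - i)) := by
  apply MvPowerSeries.ext
  intro d
  rw [MvPowerSeries.coeff_mul, coeff_apply']
  by_cases hd : d 1 = 0
  · rw [pureS, if_pos hd]
    apply Finset.sum_nbij' (i := fun p => p.1 0)
      (j := fun i => (Finsupp.single 0 i, Finsupp.single 0 (d 0 - i)))
    · intro p hp
      rw [Finset.HasAntidiagonal.mem_antidiagonal] at hp
      have h0 : p.1 0 + p.2 0 = d 0 := by rw [← hp]; rfl
      simp only [Finset.mem_range]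
      omega
    · intro i hi
      rw [Finset.mem_range] at hi
      rw [Finset.HasAntidiagonal.mem_antidiagonal]
      apply fin2_ext
      · simp only [Finsupp.coe_add, Pi.add_apply, Finsupp.single_eq_same]
        omega
      · simp only [Finsupp.coe_add, Pi.add_apply]
        rw [Finsupp.single_eq_of_ne (by decide), Finsupp.single_eq_of_ne (by decide)]
        omega
    · intro p hp
      rw [Finset.HasAntidiagonal.mem_antidiagonal] at hp
      have h0 : p.1 0 + p.2 0 = d 0 := by rw [← hp]; rfl
      have h1 : p.1 1 + p.2 1 = d 1 := by rw [← hp]; rfl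
      have hp1 : p.1 1 = 0 := by omega
      have hp2 : p.2 1 = 0 := by omega
      have e1 : p.1 = Finsupp.single 0 (p.1 0) := by
        apply fin2_ext
        · rw [Finsupp.single_eq_same]
        · rw [Finsupp.single_eq_of_ne (by decide)]; exact hp1
      have e2 : p.2 = Finsupp.single 0 (d 0 - p.1 0) := by
        apply fin2_ext
        · rw [Finsupp.single_eq_same]; omega
        · rw [Finsupp.single_eq_of_ne (by decide)]; exact hp2
      exact (Prod.ext_iff.mpr ⟨e1, e2⟩).symm
    · intro i hi
      simp [Finsupp.single_eq_same]
    · intro p hp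
      rw [Finset.HasAntidiagonal.mem_antidiagonal] at hp
      have h0 : p.1 0 + p.2 0 = d 0 := by rw [← hp]; rfl
      have h1 : p.1 1 + p.2 1 = d 1 := by rw [← hp]; rfl
      rw [coeff_apply', coeff_apply', pureS, pureS, if_pos (by omega : p.1 1 = 0),
        if_pos (by omega : p.2 1 = 0)]
      congr 2
      omega
  · rw [pureS, if_neg hd]
    apply Finset.sum_eq_zero
    intro p hp
    rw [Finset.HasAntidiagonal.mem_antidiagonal] at hp
    have h1 : p.1 1 + p.2 1 = d 1 := by rw [← hp]; rfl
    rcases Nat.eq_zero_or_pos (p.1 1) with h | h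
    · rw [coeff_apply' _ p.2, pureS, if_neg (by omega), mul_zero]
    · rw [coeff_apply' _ p.1, pureS, if_neg (by omega), zero_mul]

theorem mul_pureT (φ ψ : ℕ → ℤ) :
    pureT φ * pureT ψ =
      pureT (fun x => ∑ i ∈ Finset.range (x + 1), φ i * ψ (x - i)) := by
  apply MvPowerSeries.ext
  intro d
  rw [MvPowerSeries.coeff_mul, coeff_apply']
  by_cases hd : d 0 = 0
  · rw [pureT, if_pos hd]
    apply Finset.sum_nbij' (i := fun p => p.1 1)
      (j := fun i => (Finsupp.single 1 i, Finsupp.single 1 (d 1 - i)))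
    · intro p hp
      rw [Finset.HasAntidiagonal.mem_antidiagonal] at hp
      have h0 : p.1 1 + p.2 1 = d 1 := by rw [← hp]; rfl
      simp only [Finset.mem_range]
      omega
    · intro i hi
      rw [Finset.mem_range] at hi
      rw [Finset.HasAntidiagonal.mem_antidiagonal]
      apply fin2_ext
      · simp only [Finsupp.coe_add, Pi.add_apply]
        rw [Finsupp.single_eq_of_ne (by decide), Finsupp.single_eq_of_ne (by decide)]
        omega
      · simp only [Finsupp.coe_add, Pi.add_apply, Finsupp.single_eq_same]
        omega
    · intro p hp
      rw [Finset.HasAntidiagonal.mem_antidiagonal] at hp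
      have h0 : p.1 1 + p.2 1 = d 1 := by rw [← hp]; rfl
      have h1 : p.1 0 + p.2 0 = d 0 := by rw [← hp]; rfl
      have hp1 : p.1 0 = 0 := by omega
      have hp2 : p.2 0 = 0 := by omega
      have e1 : p.1 = Finsupp.single 1 (p.1 1) := by
        apply fin2_ext
        · rw [Finsupp.single_eq_of_ne (by decide)]; exact hp1
        · rw [Finsupp.single_eq_same]
      have e2 : p.2 = Finsupp.single 1 (d 1 - p.1 1) := by
        apply fin2_ext
        · rw [Finsupp.single_eq_of_ne (by decide)]; exact hp2
        · rw [Finsupp.single_eq_same]; omega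
      exact (Prod.ext_iff.mpr ⟨e1, e2⟩).symm
    · intro i hi
      simp [Finsupp.single_eq_same]
    · intro p hp
      rw [Finset.HasAntidiagonal.mem_antidiagonal] at hp
      have h0 : p.1 1 + p.2 1 = d 1 := by rw [← hp]; rfl
      have h1 : p.1 0 + p.2 0 = d 0 := by rw [← hp]; rfl
      rw [coeff_apply', coeff_apply', pureT, pureT, if_pos (by omega : p.1 0 = 0),
        if_pos (by omega : p.2 0 = 0)]
      congr 2
      omega
  · rw [pureT, if_neg hd]
    apply Finset.sum_eq_zero
    intro p hp
    rw [Finset.HasAntidiagonal.mem_antidiagonal] at hp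
    have h1 : p.1 0 + p.2 0 = d 0 := by rw [← hp]; rfl
    rcases Nat.eq_zero_or_pos (p.1 0) with h | h
    · rw [coeff_apply' _ p.2, pureT, if_neg (by omega), mul_zero]
    · rw [coeff_apply' _ p.1, pureT, if_neg (by omega), zero_mul]

theorem mul_pureS_pureT (φ ψ : ℕ → ℤ) :
    pureS φ * pureT ψ = fun d => φ (d 0) * ψ (d 1) := by
  apply MvPowerSeries.ext
  intro d
  rw [MvPowerSeries.coeff_mul]; show _ = φ (d 0) * ψ (d 1)
  refine (Finset.sum_eq_single_of_mem
    ((Finsupp.single 0 (d 0), Finsupp.single 1 (d 1)) : (Fin 2 →₀ ℕ) × (Fin 2 →₀ ℕ))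
    ?_ ?_).trans ?_
  · rw [Finset.HasAntidiagonal.mem_antidiagonal]
    apply fin2_ext
    · simp only [Finsupp.coe_add, Pi.add_apply, Finsupp.single_eq_same]
      rw [Finsupp.single_eq_of_ne (by decide)]
      omega
    · simp only [Finsupp.coe_add, Pi.add_apply, Finsupp.single_eq_same]
      rw [Finsupp.single_eq_of_ne (by decide)]
      omega
  · intro p hp hne
    rw [Finset.HasAntidiagonal.mem_antidiagonal] at hp
    have h0 : p.1 0 + p.2 0 = d 0 := by rw [← hp]; rfl
    have h1 : p.1 1 + p.2 1 = d 1 := by rw [← hp]; rfl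
    rcases Nat.eq_zero_or_pos (p.1 1) with ha | ha
    · rcases Nat.eq_zero_or_pos (p.2 0) with hb | hb
      · exfalso
        apply hne
        have e1 : p.1 = Finsupp.single 0 (d 0) := by
          apply fin2_ext
          · rw [Finsupp.single_eq_same]; omega
          · rw [Finsupp.single_eq_of_ne (by decide)]; exact ha
        have e2 : p.2 = Finsupp.single 1 (d 1) := by
          apply fin2_ext
          · rw [Finsupp.single_eq_of_ne (by decide)]; exact hb
          · rw [Finsupp.single_eq_same]; omega
        exact Prod.ext_iff.mpr ⟨e1, e2⟩
      · rw [coeff_apply' _ p.2, pureT, if_neg (by omega), mul_zero]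
    · rw [coeff_apply' _ p.1, pureS, if_neg (by omega), zero_mul]
  · rw [coeff_apply', coeff_apply', pureS, pureT]
    rw [if_pos (by rw [Finsupp.single_eq_of_ne (by decide)]),
      if_pos (by rw [Finsupp.single_eq_of_ne (by decide)])]
    simp [Finsupp.single_eq_same]

theorem X0_pow (a : ℕ) :
    (MvPowerSeries.X 0 : MvPowerSeries (Fin 2) ℤ) ^ a =
      pureS (fun x => if x = a then 1 else 0) := by
  classical
  rw [MvPowerSeries.X_pow_eq]
  apply MvPowerSeries.ext
  intro d
  rw [MvPowerSeries.coeff_monomial, coeff_apply', pureS]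
  by_cases h1 : d 1 = 0
  · by_cases h0 : d 0 = a
    · rw [if_pos, if_pos h1, if_pos h0]
      apply fin2_ext
      · rw [Finsupp.single_eq_same]; exact h0
      · rw [Finsupp.single_eq_of_ne (by decide)]; exact h1
    · rw [if_neg, if_pos h1, if_neg h0]
      intro h
      apply h0
      rw [h, Finsupp.single_eq_same]
  · rw [if_neg, if_neg h1]
    intro h
    apply h1
    rw [h, Finsupp.single_eq_of_ne (by decide)]

theorem X1_pow (a : ℕ) :
    (MvPowerSeries.X 1 : MvPowerSeries (Fin 2) ℤ) ^ a =
      pureT (fun x => if x = a then 1 else 0) := by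
  classical
  rw [MvPowerSeries.X_pow_eq]
  apply MvPowerSeries.ext
  intro d
  rw [MvPowerSeries.coeff_monomial, coeff_apply', pureT]
  by_cases h1 : d 0 = 0
  · by_cases h0 : d 1 = a
    · rw [if_pos, if_pos h1, if_pos h0]
      apply fin2_ext
      · rw [Finsupp.single_eq_of_ne (by decide)]; exact h1
      · rw [Finsupp.single_eq_same]; exact h0
    · rw [if_neg, if_pos h1, if_neg h0]
      intro h
      apply h0
      rw [h, Finsupp.single_eq_same]
  · rw [if_neg, if_neg h1]
    intro h
    apply h1
    rw [h, Finsupp.single_eq_of_ne (by decide)]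

theorem pureS_one : pureS (fun x => if x = 0 then 1 else 0) = 1 := by
  apply MvPowerSeries.ext
  intro d
  rw [coeff_apply', pureS, MvPowerSeries.coeff_one]
  by_cases h1 : d 1 = 0
  · by_cases h0 : d 0 = 0
    · rw [if_pos h1, if_pos h0, if_pos (fin2_ext (by simpa using h0) (by simpa using h1))]
    · rw [if_pos h1, if_neg h0, if_neg]
      intro h
      exact h0 (by rw [h]; rfl)
  · rw [if_neg h1, if_neg]
    intro h
    exact h1 (by rw [h]; rfl)

theorem pureT_one : pureT (fun x => if x = 0 then 1 else 0) = 1 := by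
  apply MvPowerSeries.ext
  intro d
  rw [coeff_apply', pureT, MvPowerSeries.coeff_one]
  by_cases h1 : d 0 = 0
  · by_cases h0 : d 1 = 0
    · rw [if_pos h1, if_pos h0, if_pos (fin2_ext (by simpa using h1) (by simpa using h0))]
    · rw [if_pos h1, if_neg h0, if_neg]
      intro h
      exact h0 (by rw [h]; rfl)
  · rw [if_neg h1, if_neg]
    intro h
    exact h1 (by rw [h]; rfl)

theorem one_sub_X0_mul :
    (1 - MvPowerSeries.X 0 : MvPowerSeries (Fin 2) ℤ) * pureS (fun _ => 1) = 1 := by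
  have h : (1 - MvPowerSeries.X 0 : MvPowerSeries (Fin 2) ℤ) * pureS (fun _ => 1) =
      pureS (fun _ => 1) - (MvPowerSeries.X 0) ^ 1 * pureS (fun _ => 1) := by ring
  rw [h, X0_pow 1, mul_pureS, ← pureS_one]
  have : ∀ x : ℕ, ((1 : ℤ) - ∑ i ∈ Finset.range (x + 1),
      (if i = 1 then (1:ℤ) else 0) * 1) = if x = 0 then 1 else 0 := by
    intro x
    simp only [mul_one]
    rw [Finset.sum_ite_eq' (Finset.range (x + 1)) 1 (fun _ => (1:ℤ))]
    by_cases hx : x = 0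
    · subst hx; norm_num
    · rw [if_pos (by rw [Finset.mem_range]; omega), if_neg hx]; ring
  apply MvPowerSeries.ext
  intro d
  rw [map_sub, coeff_apply', coeff_apply', coeff_apply']
  simp only [pureS]
  by_cases h1 : d 1 = 0
  · rw [if_pos h1, if_pos h1, if_pos h1]
    exact this (d 0)
  · rw [if_neg h1, if_neg h1, if_neg h1]; ring

theorem one_sub_X1_mul :
    (1 - MvPowerSeries.X 1 : MvPowerSeries (Fin 2) ℤ) * pureT (fun _ => 1) = 1 := by
  have h : (1 - MvPowerSeries.X 1 : MvPowerSeries (Fin 2) ℤ) * pureT (fun _ => 1) =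
      pureT (fun _ => 1) - (MvPowerSeries.X 1) ^ 1 * pureT (fun _ => 1) := by ring
  rw [h, X1_pow 1, mul_pureT, ← pureT_one]
  have : ∀ x : ℕ, ((1 : ℤ) - ∑ i ∈ Finset.range (x + 1),
      (if i = 1 then (1:ℤ) else 0) * 1) = if x = 0 then 1 else 0 := by
    intro x
    simp only [mul_one]
    rw [Finset.sum_ite_eq' (Finset.range (x + 1)) 1 (fun _ => (1:ℤ))]
    by_cases hx : x = 0
    · subst hx; norm_num
    · rw [if_pos (by rw [Finset.mem_range]; omega), if_neg hx]; ring
  apply MvPowerSeries.ext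
  intro d
  rw [map_sub, coeff_apply', coeff_apply', coeff_apply']
  simp only [pureT]
  by_cases h1 : d 0 = 0
  · rw [if_pos h1, if_pos h1, if_pos h1]
    exact this (d 1)
  · rw [if_neg h1, if_neg h1, if_neg h1]; ring

theorem hockeyN (n x : ℕ) :
    ∑ i ∈ Finset.range (x + 1), (i + n).choose n = (x + n + 1).choose (n + 1) := by
  induction x with
  | zero => simp
  | succ x ih =>
    rw [Finset.sum_range_succ, ih]
    rw [show x + 1 + n = x + n + 1 by omega]
    rw [Nat.choose_succ_succ (x + n + 1) n]
    simp only [Nat.succ_eq_add_one]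
    omega

theorem hockey (n x : ℕ) :
    ∑ i ∈ Finset.range (x + 1), ((i + n).choose n : ℤ) = ((x + n + 1).choose (n + 1) : ℤ) := by
  rw [← Nat.cast_sum, hockeyN]

theorem geomS_pow (n : ℕ) :
    (pureS (fun _ => (1 : ℤ))) ^ (n + 1) = pureS (fun x => ((x + n).choose n : ℤ)) := by
  induction n with
  | zero => rw [pow_one]; exact congrArg pureS (funext fun x => by simp)
  | succ n ih =>
    rw [pow_succ, ih, mul_pureS]
    refine congrArg pureS (funext fun y => ?_)
    simp only [mul_one]
    rw [hockey, show y + (n + 1) = y + n + 1 from by omega]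

theorem geomT_pow (n : ℕ) :
    (pureT (fun _ => (1 : ℤ))) ^ (n + 1) = pureT (fun x => ((x + n).choose n : ℤ)) := by
  induction n with
  | zero => rw [pow_one]; exact congrArg pureT (funext fun x => by simp)
  | succ n ih =>
    rw [pow_succ, ih, mul_pureT]
    refine congrArg pureT (funext fun y => ?_)
    simp only [mul_one]
    rw [hockey, show y + (n + 1) = y + n + 1 from by omega]

theorem pureS_mul_delta (φ : ℕ → ℤ) (a : ℕ) :
    pureS φ * pureS (fun x => if x = a then 1 else 0) =
      pureS (fun x => if a ≤ x then φ (x - a) else 0) := by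
  rw [mul_pureS]
  refine congrArg pureS (funext fun x => ?_)
  by_cases hax : a ≤ x
  · rw [if_pos hax]
    rw [Finset.sum_eq_single_of_mem (x - a) (by rw [Finset.mem_range]; omega)]
    · rw [if_pos (by omega), mul_one]
    · intro i hi hne
      rw [Finset.mem_range] at hi
      rw [if_neg (by omega), mul_zero]
  · rw [if_neg hax]
    apply Finset.sum_eq_zero
    intro i hi
    rw [Finset.mem_range] at hi
    rw [if_neg (by omega), mul_zero]

theorem pureT_mul_delta (φ : ℕ → ℤ) (a : ℕ) :
    pureT φ * pureT (fun x => if x = a then 1 else 0) =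
      pureT (fun x => if a ≤ x then φ (x - a) else 0) := by
  rw [mul_pureT]
  refine congrArg pureT (funext fun x => ?_)
  by_cases hax : a ≤ x
  · rw [if_pos hax]
    rw [Finset.sum_eq_single_of_mem (x - a) (by rw [Finset.mem_range]; omega)]
    · rw [if_pos (by omega), mul_one]
    · intro i hi hne
      rw [Finset.mem_range] at hi
      rw [if_neg (by omega), mul_zero]
  · rw [if_neg hax]
    apply Finset.sum_eq_zero
    intro i hi
    rw [Finset.mem_range] at hi
    rw [if_neg (by omega), mul_zero]

theorem bracket (n x a : ℕ) (hn : 1 ≤ n) :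
    (if a ≤ x then ((x - a + n).choose n : ℤ) else 0) = ((n + x - a).choose n : ℤ) := by
  split_ifs with h
  · rw [show x - a + n = n + x - a by omega]
  · simp [Nat.choose_eq_zero_of_lt (show n + x - a < n by omega)]

end TwoSidedAux

namespace TwoSidedAux

theorem desQ_eq_des {n : ℕ} (w : Equiv.Perm (Fin n)) : desQ w = des w := rfl

theorem main_aux (n : ℕ) (hn : 1 ≤ n) :
    pureS (fun _ => (1:ℤ)) ^ (n+1) * pureT (fun _ => (1:ℤ)) ^ (n+1) * twoSidedEulerian n
      = ballsInBoxesSeries n := by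
  rw [twoSidedEulerian, Finset.mul_sum]
  apply MvPowerSeries.ext
  intro d
  rw [map_sum]
  have hterm : ∀ w : Equiv.Perm (Fin n),
      MvPowerSeries.coeff d (pureS (fun _ => (1:ℤ)) ^ (n+1) * pureT (fun _ => (1:ℤ)) ^ (n+1) *
        ((MvPowerSeries.X 0 : MvPowerSeries (Fin 2) ℤ) ^ (des w⁻¹ + 1) *
          (MvPowerSeries.X 1 : MvPowerSeries (Fin 2) ℤ) ^ (des w + 1)))
      = ((n + d 0 - (des w⁻¹ + 1)).choose n : ℤ) *
          ((n + d 1 - (des w + 1)).choose n : ℤ) := by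
    intro w
    have h1 : pureS (fun _ => (1:ℤ)) ^ (n+1) * pureT (fun _ => (1:ℤ)) ^ (n+1) *
        ((MvPowerSeries.X 0 : MvPowerSeries (Fin 2) ℤ) ^ (des w⁻¹ + 1) *
          (MvPowerSeries.X 1 : MvPowerSeries (Fin 2) ℤ) ^ (des w + 1)) =
        (pureS (fun x => ((x + n).choose n : ℤ)) *
          pureS (fun x => if x = des w⁻¹ + 1 then 1 else 0)) *
        (pureT (fun x => ((x + n).choose n : ℤ)) *
          pureT (fun x => if x = des w + 1 then 1 else 0)) := by
      rw [geomS_pow, geomT_pow, X0_pow, X1_pow]; ring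
    rw [h1, pureS_mul_delta, pureT_mul_delta, mul_pureS_pureT]
    refine (coeff_apply' _ d).trans ?_
    beta_reduce
    rw [bracket n (d 0) _ hn, bracket n (d 1) _ hn]
  rw [Finset.sum_congr rfl (fun w _ => hterm w)]
  show _ = ((d 0 * d 1 + n - 1).choose n : ℤ)
  have hk := keyCount n (d 0) (d 1) hn
  simp only [desQ_eq_des] at hk
  exact_mod_cast hk.symm

end TwoSidedAux

/-- The two-sided generating function:
`A_n(s,t) = (1-s)^{n+1} (1-t)^{n+1} ∑_{k,l ≥ 0} C(kl+n-1, n) s^k t^l`. -/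
theorem twoSidedEulerian_generating_function (n : ℕ) (hn : 1 ≤ n) :
    twoSidedEulerian n =
      (1 - MvPowerSeries.X 0 : MvPowerSeries (Fin 2) ℤ) ^ (n + 1) *
        (1 - MvPowerSeries.X 1 : MvPowerSeries (Fin 2) ℤ) ^ (n + 1) *
        ballsInBoxesSeries n := by
  have hs : (1 - MvPowerSeries.X 0 : MvPowerSeries (Fin 2) ℤ) ^ (n + 1) *
      (TwoSidedAux.pureS (fun _ => (1:ℤ))) ^ (n + 1) = 1 := by
    rw [← mul_pow, TwoSidedAux.one_sub_X0_mul, one_pow]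
  have ht : (1 - MvPowerSeries.X 1 : MvPowerSeries (Fin 2) ℤ) ^ (n + 1) *
      (TwoSidedAux.pureT (fun _ => (1:ℤ))) ^ (n + 1) = 1 := by
    rw [← mul_pow, TwoSidedAux.one_sub_X1_mul, one_pow]
  calc twoSidedEulerian n
      = ((1 - MvPowerSeries.X 0 : MvPowerSeries (Fin 2) ℤ) ^ (n + 1) *
          (TwoSidedAux.pureS (fun _ => (1:ℤ))) ^ (n + 1)) *
        ((1 - MvPowerSeries.X 1 : MvPowerSeries (Fin 2) ℤ) ^ (n + 1) *
          (TwoSidedAux.pureT (fun _ => (1:ℤ))) ^ (n + 1)) * twoSidedEulerian n := by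
        rw [hs, ht, one_mul, one_mul]
    _ = (1 - MvPowerSeries.X 0 : MvPowerSeries (Fin 2) ℤ) ^ (n + 1) *
        (1 - MvPowerSeries.X 1 : MvPowerSeries (Fin 2) ℤ) ^ (n + 1) *
        ((TwoSidedAux.pureS (fun _ => (1:ℤ))) ^ (n + 1) *
          (TwoSidedAux.pureT (fun _ => (1:ℤ))) ^ (n + 1) * twoSidedEulerian n) := by
        ring
    _ = (1 - MvPowerSeries.X 0 : MvPowerSeries (Fin 2) ℤ) ^ (n + 1) *
        (1 - MvPowerSeries.X 1 : MvPowerSeries (Fin 2) ℤ) ^ (n + 1) *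
        ballsInBoxesSeries n := by
        rw [TwoSidedAux.main_aux n hn]
end

section
/- Two-sided Worpitzky-like identity: for every n ≥ 1 and all nonnegative integers k and l, C(kl+n-1, n) = Σ_{i,j=1}^{n} A_{n,i,j} · C(k+n-i, n) · C(l+n-j, n), where C(m,n) denotes the binomial coefficient. -/
/-- The two-sided Eulerian number `A_{n,i,j}`: the number of permutations `w`
of `Fin n` with `des w⁻¹ = i - 1` and `des w = j - 1`. -/
def twoSidedEulerianNum (n i j : ℕ) : ℕ :=
  (Finset.univ.filter fun w : Equiv.Perm (Fin n) =>
    des w⁻¹ = i - 1 ∧ des w = j - 1).card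

namespace TwoSidedAux

open Finset

theorem _root_.Equiv.Perm.apply_inv_self_s14 {α : Type*} (f : Equiv.Perm α) (x : α) :
    f (f⁻¹ x) = x := f.apply_symm_apply x

theorem _root_.Equiv.Perm.inv_apply_self_s14 {α : Type*} (f : Equiv.Perm α) (x : α) :
    f⁻¹ (f x) = x := f.symm_apply_apply x


open Finset

/-- The descent set of a permutation. -/
def desSet {n : ℕ} (w : Equiv.Perm (Fin n)) : Finset (Fin n) :=
  Finset.univ.filter fun r : Fin n =>
    ∃ s : Fin n, (s : ℕ) = (r : ℕ) + 1 ∧ w s < w r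

lemma des_eq_card {n : ℕ} (w : Equiv.Perm (Fin n)) : des w = (desSet w).card := rfl

lemma mem_desSet {n : ℕ} {w : Equiv.Perm (Fin (n+1))} {i : Fin n} :
    i.castSucc ∈ desSet w ↔ w i.succ < w i.castSucc := by
  simp only [desSet, Finset.mem_filter, Finset.mem_univ, true_and]
  constructor
  · rintro ⟨s, hs, hlt⟩
    have : s = i.succ := Fin.ext (by simpa using hs)
    rwa [this] at hlt
  · intro h
    exact ⟨i.succ, by simp, h⟩

lemma desSet_lt {n : ℕ} {w : Equiv.Perm (Fin (n+1))} {r : Fin (n+1)} (h : r ∈ desSet w) :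
    (r : ℕ) < n := by
  simp only [desSet, Finset.mem_filter] at h
  obtain ⟨-, s, hs, -⟩ := h
  have := s.isLt
  omega

lemma desSet_subset {n : ℕ} (w : Equiv.Perm (Fin (n+1))) :
    desSet w ⊆ Finset.Iio (Fin.last n) := by
  intro r hr
  simp only [Finset.mem_Iio, Fin.lt_def, Fin.val_last]
  exact desSet_lt hr

lemma des_le {n : ℕ} (w : Equiv.Perm (Fin (n+1))) : des w ≤ n := by
  rw [des_eq_card]
  calc (desSet w).card ≤ (Finset.Iio (Fin.last n)).card := card_le_card (desSet_subset w)
    _ = n := by simp [Fin.card_Iio]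



/-- Monotone maps `Fin (n+1) → Fin m` that are strict at positions in `D`. -/
def mSet (n m : ℕ) (D : Finset (Fin (n+1))) : Finset (Fin (n+1) → Fin m) :=
  Finset.univ.filter fun f =>
    Monotone f ∧ ∀ i : Fin n, i.castSucc ∈ D → f i.castSucc < f i.succ

lemma mem_mSet {n m : ℕ} {D : Finset (Fin (n+1))} {f : Fin (n+1) → Fin m} :
    f ∈ mSet n m D ↔ Monotone f ∧ ∀ i : Fin n, i.castSucc ∈ D → f i.castSucc < f i.succ := by
  rw [mSet, Finset.mem_filter]
  simp only [Finset.mem_univ, true_and]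

/-- Strictly monotone maps `Fin N → Fin M`. -/
def sSet (N M : ℕ) : Finset (Fin N → Fin M) :=
  Finset.univ.filter fun g => StrictMono g

lemma mem_sSet {N M : ℕ} {g : Fin N → Fin M} : g ∈ sSet N M ↔ StrictMono g := by
  rw [sSet, Finset.mem_filter]
  simp only [Finset.mem_univ, true_and]

/-- Number of elements below `r` that are not in `D`. -/
def cnt {n : ℕ} (D : Finset (Fin (n+1))) (r : Fin (n+1)) : ℕ :=
  ((Finset.Iio r).filter (fun t => t ∉ D)).card

lemma cnt_zero {n : ℕ} (D : Finset (Fin (n+1))) : cnt D 0 = 0 := by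
  have h : Finset.Iio (0 : Fin (n+1)) = ∅ := by
    ext t
    simp [Fin.not_lt_zero]
  simp [cnt, h]

lemma cnt_mono {n : ℕ} (D : Finset (Fin (n+1))) {r r' : Fin (n+1)} (h : r ≤ r') :
    cnt D r ≤ cnt D r' :=
  card_le_card (Finset.filter_subset_filter _ (Finset.Iio_subset_Iio h))

lemma Iio_succ_eq {n : ℕ} (i : Fin n) :
    Finset.Iio (i.succ : Fin (n+1)) = insert i.castSucc (Finset.Iio i.castSucc) := by
  ext t
  simp only [Finset.mem_Iio, Finset.mem_insert, Fin.lt_def, Fin.val_succ, Fin.coe_castSucc,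
    Fin.ext_iff]
  omega

lemma cnt_succ {n : ℕ} (D : Finset (Fin (n+1))) (i : Fin n) :
    cnt D i.succ = cnt D i.castSucc + (if i.castSucc ∈ D then 0 else 1) := by
  unfold cnt
  rw [Iio_succ_eq, Finset.filter_insert]
  by_cases h : i.castSucc ∈ D
  · rw [if_neg (not_not_intro h), if_pos h]
    simp
  · rw [if_pos h, if_neg h, Finset.card_insert_of_notMem
      (fun hmem => lt_irrefl _ (Finset.mem_Iio.1 (Finset.mem_filter.1 hmem).1))]

lemma cnt_add_card_le {n : ℕ} (D : Finset (Fin (n+1))) (hD : ∀ r ∈ D, (r : ℕ) < n)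
    (r : Fin (n+1)) : cnt D r + D.card ≤ n := by
  have hdisj : Disjoint ((Finset.Iio r).filter (fun t => t ∉ D)) D := by
    simp only [Finset.disjoint_left, Finset.mem_filter]
    rintro t ⟨-, ht⟩
    exact ht
  have hsub : ((Finset.Iio r).filter (fun t => t ∉ D)) ∪ D ⊆ Finset.Iio (Fin.last n) := by
    intro t ht
    simp only [Finset.mem_Iio, Fin.lt_def, Fin.val_last]
    rcases Finset.mem_union.1 ht with ht | ht
    · simp only [Finset.mem_filter, Finset.mem_Iio, Fin.lt_def] at ht
      have := r.isLt
      omega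
    · exact hD t ht
  calc cnt D r + D.card = (((Finset.Iio r).filter (fun t => t ∉ D)) ∪ D).card :=
        (Finset.card_union_of_disjoint hdisj).symm
    _ ≤ (Finset.Iio (Fin.last n)).card := card_le_card hsub
    _ = n := by simp [Fin.card_Iio]

lemma cnt_last {n : ℕ} (D : Finset (Fin (n+1))) (hD : ∀ r ∈ D, (r : ℕ) < n) :
    cnt D (Fin.last n) = n - D.card := by
  have hsub : D ⊆ Finset.Iio (Fin.last n) := by
    intro t ht
    simp only [Finset.mem_Iio, Fin.lt_def, Fin.val_last]
    exact hD t ht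
  unfold cnt
  rw [Finset.filter_not, Finset.filter_mem_eq_inter, Finset.inter_eq_right.2 hsub,
    Finset.card_sdiff_of_subset hsub]
  simp [Fin.card_Iio]

/-- The number of strictly monotone maps `Fin N → Fin M` is `M.choose N`. -/
lemma card_sSet (N M : ℕ) : (sSet N M).card = M.choose N := by
  classical
  have h1 : (Finset.powersetCard N (Finset.univ : Finset (Fin M))).card = M.choose N := by
    rw [Finset.card_powersetCard]; simp
  rw [← h1]
  apply Finset.card_bij (fun g _ => Finset.image g Finset.univ)
  · intro g hg
    rw [mem_sSet] at hg
    rw [Finset.mem_powersetCard]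
    exact ⟨Finset.subset_univ _,
      by rw [Finset.card_image_of_injective _ hg.injective]; simp⟩
  · intro g1 hg1 g2 hg2 h
    rw [mem_sSet] at hg1 hg2
    have hc1 : (Finset.image g1 Finset.univ).card = N := by
      rw [Finset.card_image_of_injective _ hg1.injective]; simp
    have e1 := Finset.orderEmbOfFin_unique hc1
      (f := g1) (fun x => Finset.mem_image_of_mem _ (Finset.mem_univ x)) hg1
    have hc2 : (Finset.image g2 Finset.univ).card = N := by
      rw [Finset.card_image_of_injective _ hg2.injective]; simp
    have e2 := Finset.orderEmbOfFin_unique hc1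
      (f := g2) (fun x => by rw [h]; exact Finset.mem_image_of_mem _ (Finset.mem_univ x)) hg2
    rw [e1, e2]
  · intro s hs
    rw [Finset.mem_powersetCard] at hs
    refine ⟨s.orderEmbOfFin hs.2, mem_sSet.2 (s.orderEmbOfFin hs.2).strictMono, ?_⟩
    ext a
    simp only [Finset.mem_image, Finset.mem_univ, true_and]
    constructor
    · rintro ⟨i, rfl⟩
      exact Finset.orderEmbOfFin_mem s hs.2 i
    · intro ha
      have h2 : a ∈ Set.range (s.orderEmbOfFin hs.2) := by
        rw [Finset.range_orderEmbOfFin s hs.2]; exact ha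
      obtain ⟨i, hi⟩ := h2
      exact ⟨i, hi⟩


/-- Counting monotone maps with prescribed strict positions. -/
lemma card_mSet (n m : ℕ) (D : Finset (Fin (n+1))) (hD : ∀ r ∈ D, (r : ℕ) < n) :
    (mSet n m D).card = (m + (n - D.card)).choose (n+1) := by
  have hcard : D.card ≤ n := by
    have := cnt_add_card_le D hD (Fin.last n)
    omega
  rw [← card_sSet (n+1) (m + (n - D.card))]
  have hbound : ∀ (f : Fin (n+1) → Fin m) (r : Fin (n+1)),
      (f r : ℕ) + cnt D r < m + (n - D.card) := by
    intro f r
    have h1 := (f r).isLt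
    have h2 := cnt_add_card_le D hD r
    omega
  apply Finset.card_bij (fun f _ => fun r : Fin (n+1) =>
    (⟨(f r : ℕ) + cnt D r, hbound f r⟩ : Fin (m + (n - D.card))))
  · intro f hf
    rw [mem_mSet] at hf
    rw [mem_sSet]
    rw [Fin.strictMono_iff_lt_succ]
    intro i
    have hc := cnt_succ D i
    rw [Fin.mk_lt_mk]
    by_cases h : i.castSucc ∈ D
    · have := hf.2 i h
      rw [Fin.lt_def] at this
      simp only [h, if_pos] at hc
      omega
    · have := hf.1 (Fin.castSucc_le_succ i)
      rw [Fin.le_def] at this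
      simp only [h, if_neg, not_false_iff] at hc
      omega
  · intro f1 hf1 f2 hf2 h
    funext r
    have := congrFun h r
    rw [Fin.mk.injEq] at this
    exact Fin.ext (by omega)
  · intro g hg
    rw [mem_sSet] at hg
    -- every position: cnt D r ≤ g r
    have hle : ∀ r : Fin (n+1), cnt D r ≤ (g r : ℕ) := by
      intro r
      induction r using Fin.induction with
      | zero => simp [cnt_zero]
      | succ i ih =>
        have hc := cnt_succ D i
        have hs := hg (Fin.castSucc_lt_succ (i := i))
        rw [Fin.lt_def] at hs
        by_cases h : i.castSucc ∈ D <;> simp only [h, if_pos, if_neg, not_false_iff] at hc <;>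
          omega
    set f' : Fin (n+1) → ℕ := fun r => (g r : ℕ) - cnt D r with hf'
    have hmono' : ∀ i : Fin n, f' i.castSucc ≤ f' i.succ := by
      intro i
      have hc := cnt_succ D i
      have hs := hg (Fin.castSucc_lt_succ (i := i))
      rw [Fin.lt_def] at hs
      have h1 := hle i.castSucc
      have h2 := hle i.succ
      simp only [hf']
      by_cases h : i.castSucc ∈ D <;> simp only [h, if_pos, if_neg, not_false_iff] at hc <;>
        omega
    have hmono : Monotone f' := Fin.monotone_iff_le_succ.2 hmono'
    have hlt : ∀ r : Fin (n+1), f' r < m := by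
      intro r
      have h1 : f' r ≤ f' (Fin.last n) := hmono (Fin.le_last r)
      have h2 : (g (Fin.last n) : ℕ) < m + (n - D.card) := (g (Fin.last n)).isLt
      have h3 := cnt_last D hD
      have h4 := hle (Fin.last n)
      simp only [hf'] at h1 ⊢
      omega
    refine ⟨fun r => ⟨f' r, hlt r⟩, ?_, ?_⟩
    · rw [mem_mSet]
      constructor
      · intro a b hab
        rw [Fin.le_def]
        exact hmono hab
      · intro i hi
        rw [Fin.lt_def]
        have hc := cnt_succ D i
        have hs := hg (Fin.castSucc_lt_succ (i := i))
        rw [Fin.lt_def] at hs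
        have h1 := hle i.castSucc
        have h2 := hle i.succ
        simp only [hf', hi, if_pos] at hc ⊢
        omega
    · funext r
      apply Fin.ext
      simp only [hf']
      have := hle r
      omega

/-- A permutation with a compatible "P-partition" is the stable sort of the composite. -/
lemma eq_sort {n l : ℕ} (w : Equiv.Perm (Fin (n+1))) (d : Fin (n+1) → Fin l)
    (hmono : Monotone d)
    (hstrict : ∀ i : Fin n, i.castSucc ∈ desSet w → d i.castSucc < d i.succ) :
    w = Tuple.sort (fun r => d (w⁻¹ r)) := by
  rw [Tuple.eq_sort_iff]
  have hcomp : ((fun r => d (w⁻¹ r)) ∘ ⇑w) = d := funext fun i => by simp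
  refine ⟨by rw [hcomp]; exact hmono, ?_⟩
  intro i j hij hfij
  have hdij : (d i : ℕ) = (d j : ℕ) := by
    have : d i = d j := by simpa using hfij
    rw [this]
  have hu : StrictMono (fun t : Fin (n+1) => (d t : ℕ) * (n+1) + (w t : ℕ)) := by
    rw [Fin.strictMono_iff_lt_succ]
    intro i
    show (d i.castSucc : ℕ) * (n+1) + (w i.castSucc : ℕ) < (d i.succ : ℕ) * (n+1) + (w i.succ : ℕ)
    rcases lt_or_eq_of_le (hmono (Fin.castSucc_le_succ i)) with h | h
    · rw [Fin.lt_def] at h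
      have hw2 := (w i.castSucc).isLt
      have h3 : ((d i.castSucc : ℕ) + 1) * (n+1) ≤ (d i.succ : ℕ) * (n+1) :=
        Nat.mul_le_mul_right _ (by omega)
      rw [add_one_mul] at h3
      linarith
    · have hne : w i.castSucc ≠ w i.succ := fun hh =>
        (Fin.castSucc_lt_succ (i := i)).ne (w.injective hh)
      have hnd : ¬ w i.succ < w i.castSucc := fun hh => by
        have := hstrict i (mem_desSet.2 hh)
        rw [h] at this
        exact lt_irrefl _ this
      have hww : w i.castSucc < w i.succ := lt_of_le_of_ne (not_lt.1 hnd) hne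
      rw [Fin.lt_def] at hww
      rw [h]
      linarith
  have h2 : (d i : ℕ) * (n+1) + (w i : ℕ) < (d j : ℕ) * (n+1) + (w j : ℕ) := hu hij
  rw [hdij] at h2
  rw [Fin.lt_def]
  linarith

lemma key (n k l : ℕ) (hk : 0 < k) (hl : 0 < l) :
    (mSet n (k*l) ∅).card =
      ∑ w : Equiv.Perm (Fin (n+1)),
        (mSet n k (desSet w⁻¹)).card * (mSet n l (desSet w)).card := by
  classical
  have hT : ∑ w : Equiv.Perm (Fin (n+1)),
      (mSet n k (desSet w⁻¹)).card * (mSet n l (desSet w)).card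
      = ((Finset.univ : Finset (Equiv.Perm (Fin (n+1)))).sigma
          (fun w => (mSet n k (desSet w⁻¹)) ×ˢ (mSet n l (desSet w)))).card := by
    rw [Finset.card_sigma]
    exact Finset.sum_congr rfl fun w _ => by rw [Finset.card_product]
  rw [hT]
  symm
  have hbound : ∀ (w : Equiv.Perm (Fin (n+1))) (c : Fin (n+1) → Fin k)
      (d : Fin (n+1) → Fin l) (r : Fin (n+1)), (c r : ℕ) * l + (d (w⁻¹ r) : ℕ) < k * l := by
    intro w c d r
    have h1 := (c r).isLt
    have h2 := (d (w⁻¹ r)).isLt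
    have h3 : ((c r : ℕ) + 1) * l ≤ k * l := Nat.mul_le_mul_right _ (by omega)
    rw [add_one_mul] at h3
    linarith
  apply Finset.card_bij (fun p _ => fun r : Fin (n+1) =>
    (⟨(p.2.1 r : ℕ) * l + (p.2.2 ((p.1)⁻¹ r) : ℕ), hbound p.1 p.2.1 p.2.2 r⟩ : Fin (k*l)))
  · rintro ⟨w, c, d⟩ hp
    rw [Finset.mem_sigma] at hp
    obtain ⟨-, hp⟩ := hp
    rw [Finset.mem_product] at hp
    obtain ⟨hc, hd⟩ := hp
    rw [mem_mSet] at hc hd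
    dsimp only at hc hd
    rw [mem_mSet]
    refine ⟨?_, fun i hi => absurd hi (by simp)⟩
    rw [Fin.monotone_iff_le_succ]
    intro i
    rw [Fin.le_def]
    simp only
    have hcc := hc.1 (Fin.castSucc_le_succ i)
    rw [Fin.le_def] at hcc
    rcases lt_or_eq_of_le hcc with h | h
    · have h2 := (d (w⁻¹ i.castSucc)).isLt
      have h3 : ((c i.castSucc : ℕ) + 1) * l ≤ (c i.succ : ℕ) * l :=
        Nat.mul_le_mul_right _ (by omega)
      rw [add_one_mul] at h3
      linarith
    · have hdd : (d (w⁻¹ i.castSucc) : ℕ) ≤ (d (w⁻¹ i.succ) : ℕ) := by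
        by_contra hcon
        push_neg at hcon
        have hlt : d (w⁻¹ i.succ) < d (w⁻¹ i.castSucc) := by rwa [Fin.lt_def]
        have horder : w⁻¹ i.succ < w⁻¹ i.castSucc := by
          by_contra h2
          push_neg at h2
          exact absurd (hd.1 h2) (not_le.2 hlt)
        have hmem : i.castSucc ∈ desSet w⁻¹ := mem_desSet.2 horder
        have := hc.2 i hmem
        rw [Fin.lt_def] at this
        omega
      rw [h]
      exact Nat.add_le_add_left hdd _
  · rintro ⟨w1, c1, d1⟩ hp1 ⟨w2, c2, d2⟩ hp2 h
    rw [Finset.mem_sigma] at hp1 hp2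
    obtain ⟨-, hp1⟩ := hp1
    obtain ⟨-, hp2⟩ := hp2
    rw [Finset.mem_product] at hp1 hp2
    obtain ⟨hc1, hd1⟩ := hp1
    obtain ⟨hc2, hd2⟩ := hp2
    rw [mem_mSet] at hc1 hd1 hc2 hd2
    dsimp only at hc1 hd1 hc2 hd2
    have hpt : ∀ r, (c1 r : ℕ) * l + (d1 (w1⁻¹ r) : ℕ)
        = (c2 r : ℕ) * l + (d2 (w2⁻¹ r) : ℕ) := by
      intro r
      have := congrFun h r
      rwa [Fin.mk.injEq] at this
    have hcd : ∀ r, (c1 r : ℕ) = (c2 r : ℕ) ∧ (d1 (w1⁻¹ r) : ℕ) = (d2 (w2⁻¹ r) : ℕ) := by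
      intro r
      have e := hpt r
      have h1 := (d1 (w1⁻¹ r)).isLt
      have h2 := (d2 (w2⁻¹ r)).isLt
      have hq : (c1 r : ℕ) = (c2 r : ℕ) := by
        rcases lt_trichotomy (c1 r : ℕ) (c2 r : ℕ) with hlt | heq | hgt
        · exfalso
          have h3 : ((c1 r : ℕ) + 1) * l ≤ (c2 r : ℕ) * l := Nat.mul_le_mul_right _ (by omega)
          rw [add_one_mul] at h3
          linarith
        · exact heq
        · exfalso
          have h3 : ((c2 r : ℕ) + 1) * l ≤ (c1 r : ℕ) * l := Nat.mul_le_mul_right _ (by omega)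
          rw [add_one_mul] at h3
          linarith
      refine ⟨hq, ?_⟩
      rw [hq] at e
      exact Nat.add_left_cancel e
    have hceq : c1 = c2 := funext fun r => Fin.ext (hcd r).1
    have hyeq : (fun r => d1 (w1⁻¹ r)) = (fun r => d2 (w2⁻¹ r)) :=
      funext fun r => Fin.ext (hcd r).2
    have hw1 : w1 = Tuple.sort (fun r => d1 (w1⁻¹ r)) := eq_sort w1 d1 hd1.1 hd1.2
    have hw2 : w2 = Tuple.sort (fun r => d1 (w1⁻¹ r)) := by
      rw [hyeq]
      exact eq_sort w2 d2 hd2.1 hd2.2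
    have hweq : w1 = w2 := hw1.trans hw2.symm
    have hdeq : d1 = d2 := by
      funext j
      have hj := congrFun hyeq (w1 j)
      simp only [Equiv.Perm.inv_apply_self_s14] at hj
      rw [hweq] at hj
      rwa [Equiv.Perm.inv_apply_self_s14] at hj
    subst hweq
    rw [hceq, hdeq]
  · intro a ha
    rw [mem_mSet] at ha
    obtain ⟨hamono, -⟩ := ha
    set y : Fin (n+1) → Fin l := fun r => ⟨(a r : ℕ) % l, Nat.mod_lt _ hl⟩ with hy
    set w : Equiv.Perm (Fin (n+1)) := Tuple.sort y with hw
    have hsort := Tuple.eq_sort_iff.1 hw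
    have hdmono : Monotone (y ∘ ⇑w) := hsort.1
    have hties := hsort.2
    have hcb : ∀ r : Fin (n+1), (a r : ℕ) / l < k := by
      intro r
      rw [Nat.div_lt_iff_lt_mul hl]
      exact (a r).isLt
    set c : Fin (n+1) → Fin k := fun r => ⟨(a r : ℕ) / l, hcb r⟩ with hc
    set d : Fin (n+1) → Fin l := fun s => y (w s) with hd
    have hdm : Monotone d := fun s t hst => hdmono hst
    refine ⟨⟨w, c, d⟩, ?_, ?_⟩
    · rw [Finset.mem_sigma]
      refine ⟨Finset.mem_univ _, ?_⟩
      rw [Finset.mem_product]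
      constructor
      · rw [mem_mSet]
        constructor
        · intro r r' hrr
          simp only [hc, Fin.mk_le_mk]
          apply Nat.div_le_div_right
          have := hamono hrr
          rwa [Fin.le_def] at this
        · intro i hi
          have horder : w⁻¹ i.succ < w⁻¹ i.castSucc := mem_desSet.1 hi
          have hylt : (a i.succ : ℕ) % l < (a i.castSucc : ℕ) % l := by
            have h1 : d (w⁻¹ i.succ) ≤ d (w⁻¹ i.castSucc) := hdm (le_of_lt horder)
            rcases lt_or_eq_of_le h1 with h2 | h2
            · simp only [hd, Equiv.Perm.apply_inv_self_s14, hy, Fin.mk_lt_mk] at h2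
              exact h2
            · exfalso
              simp only [hd] at h2
              have hlt2 := hties _ _ horder h2
              rw [Equiv.Perm.apply_inv_self_s14, Equiv.Perm.apply_inv_self_s14] at hlt2
              exact absurd hlt2 (not_lt.2 (le_of_lt (Fin.castSucc_lt_succ (i := i))))
          simp only [hc, Fin.mk_lt_mk]
          have hle2 : (a i.castSucc : ℕ) ≤ (a i.succ : ℕ) := by
            have := hamono (Fin.castSucc_le_succ i)
            rwa [Fin.le_def] at this
          have e1 := Nat.div_add_mod (a i.castSucc : ℕ) l
          have e2 := Nat.div_add_mod (a i.succ : ℕ) l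
          have hdiv : (a i.castSucc : ℕ) / l ≤ (a i.succ : ℕ) / l := Nat.div_le_div_right hle2
          rcases lt_or_eq_of_le hdiv with h3 | h3
          · exact h3
          · exfalso
            rw [h3] at e1
            linarith
      · rw [mem_mSet]
        refine ⟨hdm, ?_⟩
        intro i hi
        have hdesc : w i.succ < w i.castSucc := mem_desSet.1 hi
        have h1 : d i.castSucc ≤ d i.succ := hdm (Fin.castSucc_le_succ i)
        rcases lt_or_eq_of_le h1 with h2 | h2
        · exact h2
        · exfalso
          simp only [hd] at h2
          have := hties _ _ (Fin.castSucc_lt_succ (i := i)) h2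
          exact absurd hdesc (not_lt.2 (le_of_lt this))
    · funext r
      apply Fin.ext
      simp only [hd, Equiv.Perm.apply_inv_self_s14, hy, hc]
      exact Nat.div_add_mod' (a r : ℕ) l


lemma rhs_eq (n k l : ℕ) :
    (∑ i ∈ Finset.Icc 1 (n+1), ∑ j ∈ Finset.Icc 1 (n+1),
        twoSidedEulerianNum (n+1) i j * Nat.choose (k + (n+1) - i) (n+1) *
          Nat.choose (l + (n+1) - j) (n+1))
    = ∑ w : Equiv.Perm (Fin (n+1)),
        Nat.choose (k + (n - des w⁻¹)) (n+1) * Nat.choose (l + (n - des w)) (n+1) := by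
  classical
  have step : ∀ i j, twoSidedEulerianNum (n+1) i j * Nat.choose (k + (n+1) - i) (n+1) *
      Nat.choose (l + (n+1) - j) (n+1)
      = ∑ w : Equiv.Perm (Fin (n+1)),
          if des w⁻¹ = i - 1 ∧ des w = j - 1 then
            Nat.choose (k + (n+1) - i) (n+1) * Nat.choose (l + (n+1) - j) (n+1) else 0 := by
    intro i j
    rw [twoSidedEulerianNum, Finset.card_filter, Finset.sum_mul, Finset.sum_mul]
    apply Finset.sum_congr rfl
    intro w _
    by_cases h : des w⁻¹ = i - 1 ∧ des w = j - 1 <;> simp [h]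
  simp only [step]
  have h1 : (∑ i ∈ Finset.Icc 1 (n+1), ∑ j ∈ Finset.Icc 1 (n+1),
      ∑ w : Equiv.Perm (Fin (n+1)),
        if des w⁻¹ = i - 1 ∧ des w = j - 1 then
          Nat.choose (k + (n+1) - i) (n+1) * Nat.choose (l + (n+1) - j) (n+1) else 0)
      = ∑ i ∈ Finset.Icc 1 (n+1), ∑ w : Equiv.Perm (Fin (n+1)), ∑ j ∈ Finset.Icc 1 (n+1),
        if des w⁻¹ = i - 1 ∧ des w = j - 1 then
          Nat.choose (k + (n+1) - i) (n+1) * Nat.choose (l + (n+1) - j) (n+1) else 0 :=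
    Finset.sum_congr rfl fun i _ => Finset.sum_comm
  rw [h1, Finset.sum_comm]
  apply Finset.sum_congr rfl
  intro w _
  have hd1 : des w⁻¹ ≤ n := des_le w⁻¹
  have hd2 : des w ≤ n := des_le w
  rw [Finset.sum_eq_single (des w⁻¹ + 1)]
  · rw [Finset.sum_eq_single (des w + 1)]
    · rw [if_pos (by omega)]
      congr 2 <;> omega
    · intro j hj hne
      rw [Finset.mem_Icc] at hj
      rw [if_neg (by omega)]
    · intro hmem
      exact absurd (Finset.mem_Icc.2 (by omega)) hmem
  · intro i hi hne
    rw [Finset.mem_Icc] at hi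
    apply Finset.sum_eq_zero
    intro j _
    rw [if_neg (by omega)]
  · intro hmem
    exact absurd (Finset.mem_Icc.2 (by omega)) hmem

end TwoSidedAux

/-- The two-sided Worpitzky-like identity:
`C(kl+n-1, n) = ∑_{i,j=1}^n A_{n,i,j} C(k+n-i, n) C(l+n-j, n)`. -/
theorem twoSided_worpitzky (n k l : ℕ) (hn : 1 ≤ n) :
    Nat.choose (k * l + n - 1) n =
      ∑ i ∈ Finset.Icc 1 n, ∑ j ∈ Finset.Icc 1 n,
        twoSidedEulerianNum n i j * Nat.choose (k + n - i) n *
          Nat.choose (l + n - j) n := by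
  obtain ⟨n, rfl⟩ : ∃ m, n = m + 1 := ⟨n - 1, by omega⟩
  rw [TwoSidedAux.rhs_eq]
  rcases Nat.eq_zero_or_pos k with rfl | hk
  · rw [show 0 * l + (n+1) - 1 = n by omega, Nat.choose_eq_zero_of_lt (by omega)]
    symm
    apply Finset.sum_eq_zero
    intro w _
    have hd : des w⁻¹ ≤ n := TwoSidedAux.des_le w⁻¹
    rw [Nat.choose_eq_zero_of_lt (show 0 + (n - des w⁻¹) < n + 1 by omega), zero_mul]
  rcases Nat.eq_zero_or_pos l with rfl | hl
  · rw [show k * 0 + (n+1) - 1 = n by omega, Nat.choose_eq_zero_of_lt (by omega)]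
    symm
    apply Finset.sum_eq_zero
    intro w _
    have hd : des w ≤ n := TwoSidedAux.des_le w
    rw [Nat.choose_eq_zero_of_lt (show 0 + (n - des w) < n + 1 by omega), mul_zero]
  · have hL : k * l + (n+1) - 1 = k * l + (n - (∅ : Finset (Fin (n+1))).card) := by
      rw [Finset.card_empty]
      omega
    rw [hL, ← TwoSidedAux.card_mSet n (k*l) ∅ (by simp), TwoSidedAux.key n k l hk hl]
    apply Finset.sum_congr rfl
    intro w _
    rw [TwoSidedAux.card_mSet n k _ (fun r hr => TwoSidedAux.desSet_lt hr),
        TwoSidedAux.card_mSet n l _ (fun r hr => TwoSidedAux.desSet_lt hr)]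
    rfl
end
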